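/- arXiv:1810.11331 — 5 statements merged into one kernel-verified Lean document; each statement's English description precedes it below -/
import Mathlib

section
/- Let ρ be a critical radius function on ℝ^d. Then there exists a sequence of points {x_j}_{j∈ℕ} in ℝ^d such that the critical balls Q_j = B(x_j, ρ(x_j)) satisfy: (i) ⋃_{j∈ℕ} Q_j = ℝ^d; and (ii) there exist constants C and N₁ (depending only on d and the constants of ρ) such that for every σ ≥ 1 and every x ∈ ℝ^d, Σ_{j∈ℕ} χ_{σQ_j}(x) ≤ C σ^{N₁}, where σQ_j = B(x_j, σρ(x_j)). -/
open MeasureTheory Metric Set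
open scoped ENNReal NNReal

noncomputable section

/-- Euclidean space ℝ^d. -/
abbrev Euc (d : ℕ) := EuclideanSpace ℝ (Fin d)

/-- A Young function: continuous, convex, increasing, vanishing at 0, nonnegative on `[0,∞)`. -/
structure IsYoung (A : ℝ → ℝ) : Prop where
  continuous : ContinuousOn A (Ici 0)
  convex : ConvexOn ℝ (Ici 0) A
  mono : MonotoneOn A (Ici 0)
  zero : A 0 = 0
  nonneg : ∀ t, 0 ≤ t → 0 ≤ A t

/-- The Luxemburg average `‖f‖_{A,B(c,r)}`. -/
def luxAvg {d : ℕ} (A : ℝ → ℝ) (f : Euc d → ℝ) (c : Euc d) (r : ℝ) : ℝ :=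
  sInf {lam : ℝ | 0 < lam ∧
    (∫ t in ball c r, A (|f t| / lam)) ≤ (volume (ball c r)).toReal}

/-- The Orlicz maximal operator `M_A`. -/
def orliczMax {d : ℕ} (A : ℝ → ℝ) (f : Euc d → ℝ) (x : Euc d) : ℝ≥0∞ :=
  ⨆ (c : Euc d) (r : ℝ) (_ : x ∈ ball c r), ENNReal.ofReal (luxAvg A f c r)

/-- The local Orlicz maximal operator `M_A^{loc}` (over sub-critical balls). -/
def orliczMaxLoc {d : ℕ} (ρ : Euc d → ℝ) (A : ℝ → ℝ) (f : Euc d → ℝ) (x : Euc d) : ℝ≥0∞ :=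
  ⨆ (c : Euc d) (r : ℝ) (_ : x ∈ ball c r ∧ r ≤ ρ c), ENNReal.ofReal (luxAvg A f c r)

/-- The maximal operator `M_A^θ`. -/
def orliczMaxTheta {d : ℕ} (ρ : Euc d → ℝ) (θ : ℝ) (A : ℝ → ℝ) (f : Euc d → ℝ)
    (x : Euc d) : ℝ≥0∞ :=
  ⨆ (c : Euc d) (r : ℝ) (_ : x ∈ ball c r),
    ENNReal.ofReal ((1 + r / ρ c) ^ (-θ) * luxAvg A f c r)

/-- The maximal operator `M_r^θ` of `r`-power averages. -/
def powMaxTheta {d : ℕ} (ρ : Euc d → ℝ) (r θ : ℝ) (w : Euc d → ℝ) (x : Euc d) : ℝ≥0∞ :=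
  ⨆ (c : Euc d) (s : ℝ) (_ : x ∈ ball c s),
    ENNReal.ofReal ((1 + s / ρ c) ^ (-θ) *
      ((∫ y in ball c s, w y ^ r) / (volume (ball c s)).toReal) ^ (1 / r))

/-- The maximal operator `M^θ` of plain averages. -/
def avgMaxTheta {d : ℕ} (ρ : Euc d → ℝ) (θ : ℝ) (w : Euc d → ℝ) (x : Euc d) : ℝ≥0∞ :=
  ⨆ (c : Euc d) (s : ℝ) (_ : x ∈ ball c s),
    ENNReal.ofReal ((1 + s / ρ c) ^ (-θ) *
      ((∫ y in ball c s, w y) / (volume (ball c s)).toReal))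

/-- The class `D_p` of Young functions: `∫_c^∞ (t/A(t))^{p'-1} dt/t < ∞` for some `c > 0`,
where `p' = p/(p-1)`. -/
def InDp (A : ℝ → ℝ) (p : ℝ) : Prop :=
  ∃ c > (0:ℝ), IntegrableOn (fun t => (t / A t) ^ (p / (p - 1) - 1) / t) (Ici c)

/-- A weight: a nonnegative locally integrable function. -/
def IsWeight {d : ℕ} (w : Euc d → ℝ) : Prop :=
  (∀ x, 0 ≤ w x) ∧ LocallyIntegrable w volume

/-- Bounded measurable functions with compact support. -/
def BddCompSupp {d : ℕ} (f : Euc d → ℝ) : Prop :=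
  Measurable f ∧ (∃ M, ∀ x, |f x| ≤ M) ∧ HasCompactSupport f

/-- A Calderón–Zygmund operator with kernel `K`. -/
structure IsCZO (d : ℕ) (T : (Euc d → ℝ) → Euc d → ℝ) (K : Euc d → Euc d → ℝ) : Prop where
  add : ∀ f g, T (f + g) = T f + T g
  smul : ∀ (a : ℝ) (f), T (a • f) = a • T f
  l2bdd : ∃ C > (0:ℝ), ∀ f : Euc d → ℝ, MemLp f 2 volume →
    MemLp (T f) 2 volume ∧ eLpNorm (T f) 2 volume ≤ ENNReal.ofReal C * eLpNorm f 2 volume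
  meas_kernel : Measurable (Function.uncurry K)
  repr : ∀ f, BddCompSupp f →
    ∀ᵐ x ∂volume, x ∉ tsupport f → T f x = ∫ y, K x y * f y
  kernel_bounds : ∃ C > (0:ℝ), ∃ δ₀ : ℝ, 0 < δ₀ ∧ δ₀ ≤ 1 ∧
    (∀ x y, x ≠ y → |K x y| ≤ C * dist x y ^ (-(d : ℝ))) ∧
    (∀ x x' y, x ≠ y → x' ≠ y → 2 * dist x x' ≤ dist x y →
      |K x y - K x' y| + |K y x - K y x'| ≤
        C * dist x x' ^ δ₀ * dist x y ^ (-(d : ℝ) - δ₀))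

/-- A critical radius function with constants `C₀`, `N₀`. -/
def IsCriticalRadius {d : ℕ} (ρ : Euc d → ℝ) (C₀ N₀ : ℝ) : Prop :=
  0 < C₀ ∧ 1 ≤ N₀ ∧ (∀ x, 0 < ρ x) ∧
  ∀ x y : Euc d,
    C₀⁻¹ * ρ x * (1 + dist x y / ρ x) ^ (-N₀) ≤ ρ y ∧
    ρ y ≤ C₀ * ρ x * (1 + dist x y / ρ x) ^ (N₀ / (N₀ + 1))

/-- The annulus `{x : R < |x - x₀| < 2R}`. -/
def annulus {d : ℕ} (x₀ : Euc d) (R : ℝ) : Set (Euc d) :=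
  {x | R < dist x x₀ ∧ dist x x₀ < 2 * R}

/-- Condition `(a_s)`. -/
def CondAs {d : ℕ} (ρ : Euc d → ℝ) (s : ℝ) (K : Euc d → Euc d → ℝ) : Prop :=
  ∀ N > (0:ℝ), ∃ C > (0:ℝ), ∀ (x₀ y : Euc d) (R : ℝ), 0 < R → dist y x₀ < R / 2 →
    (∫ x in annulus x₀ R, |K x y| ^ s) ^ (1 / s) ≤
      C * R ^ (-((d : ℝ) / (s / (s - 1)))) * (1 + R / ρ x₀) ^ (-N)

/-- Condition `(a'_s)`. -/
def CondAs' {d : ℕ} (ρ : Euc d → ℝ) (s : ℝ) (K : Euc d → Euc d → ℝ) : Prop :=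
  ∀ N > (0:ℝ), ∃ C > (0:ℝ), ∀ (x₀ y : Euc d) (R : ℝ), 0 < R →
    R < dist y x₀ → dist y x₀ < 2 * R →
    (∫ x in ball x₀ (R / 2), |K x y| ^ s) ^ (1 / s) ≤
      C * R ^ (-((d : ℝ) / (s / (s - 1)))) * (1 + R / ρ x₀) ^ (-N)

/-- Condition `(b_s)` for the kernel `Q` (typically `Q = K - K₀`). -/
def CondBs {d : ℕ} (ρ : Euc d → ℝ) (s : ℝ) (Q : Euc d → Euc d → ℝ) : Prop :=
  ∃ C > (0:ℝ), ∃ δ > (0:ℝ), ∀ (x₀ y : Euc d) (R : ℝ), 0 < R → R ≤ ρ x₀ →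
    dist y x₀ < R / 2 →
    (∫ x in annulus x₀ R, |Q x y| ^ s) ^ (1 / s) ≤
      C * R ^ (-((d : ℝ) / (s / (s - 1)))) * (R / ρ x₀) ^ δ

/-- Condition `(b'_s)` for the kernel `Q`. -/
def CondBs' {d : ℕ} (ρ : Euc d → ℝ) (s : ℝ) (Q : Euc d → Euc d → ℝ) : Prop :=
  ∃ C > (0:ℝ), ∃ ε > (0:ℝ), ∀ (x₀ y : Euc d) (R : ℝ), 0 < R → R ≤ ρ x₀ →
    R < dist y x₀ → dist y x₀ < 2 * R →
    (∫ x in ball x₀ (R / 2), |Q x y| ^ s) ^ (1 / s) ≤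
      C * R ^ (-((d : ℝ) / (s / (s - 1)))) * (R / ρ x₀) ^ ε

/-- Condition `(c_s)`. -/
def CondCs {d : ℕ} (ρ : Euc d → ℝ) (s : ℝ) (K : Euc d → Euc d → ℝ) : Prop :=
  ∃ δ > (0:ℝ), ∀ N > (0:ℝ), ∃ C > (0:ℝ), ∀ (x₀ y : Euc d) (R : ℝ), 0 < R →
    dist y x₀ < R / 2 →
    (∫ x in annulus x₀ R, |K x y| ^ s) ^ (1 / s) ≤
      C * R ^ (-((d : ℝ) / (s / (s - 1)))) * (1 + ρ x₀ / R) ^ (-δ) * (1 + R / ρ x₀) ^ (-N)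

/-- Pointwise size condition `(a_∞)`. -/
def CondAinfty {d : ℕ} (ρ : Euc d → ℝ) (K : Euc d → Euc d → ℝ) : Prop :=
  ∀ N > (0:ℝ), ∃ C > (0:ℝ), ∀ x y : Euc d, x ≠ y →
    |K x y| ≤ C * dist x y ^ (-(d : ℝ)) * (1 + dist x y / ρ x) ^ (-N)

/-- Pointwise comparison condition `(b_∞)` for `Q = K - K₀`. -/
def CondBinfty {d : ℕ} (ρ : Euc d → ℝ) (Q : Euc d → Euc d → ℝ) : Prop :=
  ∃ C > (0:ℝ), ∃ δ > (0:ℝ), ∀ x y : Euc d, x ≠ y →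
    |Q x y| ≤ C * dist x y ^ (-(d : ℝ)) * (dist x y / ρ y) ^ δ

set_option maxHeartbeats 2000000 in
/-- for a critical radius function `ρ` there is a sequence `x_j` such that the
critical balls `Q_j = B(x_j, ρ(x_j))` cover `ℝ^d`, and there are constants `C, N₁ > 0` such that
for every `σ ≥ 1`, `Σ_j χ_{σ Q_j} ≤ C σ^{N₁}` pointwise. -/
theorem stmt4 {d : ℕ} (hd : 1 ≤ d) (ρ : Euc d → ℝ) (C₀ N₀ : ℝ)
    (hρ : IsCriticalRadius ρ C₀ N₀) :
    ∃ x : ℕ → Euc d,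
      (⋃ j, ball (x j) (ρ (x j))) = univ ∧
      ∃ C > (0:ℝ), ∃ N₁ > (0:ℝ), ∀ σ : ℝ, 1 ≤ σ → ∀ z : Euc d,
        (∑' j, Set.indicator (ball (x j) (σ * ρ (x j))) (fun _ => (1 : ℝ≥0∞)) z) ≤
          ENNReal.ofReal (C * σ ^ N₁) := by
  classical
  obtain ⟨hC₀, hN₀, hρpos, hbd⟩ := hρ
  haveI : Nonempty (Fin d) := ⟨⟨0, hd⟩⟩
  have hN₀0 : (0:ℝ) ≤ N₀ := le_trans zero_le_one hN₀
  have hC₀1 : 1 ≤ C₀ := by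
    have h := (hbd 0 0).1
    simp only [dist_self, zero_div, add_zero, Real.one_rpow, mul_one] at h
    have h0 := hρpos 0
    have h1 : ρ 0 ≤ C₀ * ρ 0 := by
      have h2 := mul_le_mul_of_nonneg_left h hC₀.le
      rwa [← mul_assoc, mul_inv_cancel₀ hC₀.ne', one_mul] at h2
    nlinarith
  -- small constant
  set c1 : ℝ := C₀⁻¹ * 2 ^ (-N₀) with hc1
  have hc1pos : 0 < c1 := by positivity
  have hc1le1 : c1 ≤ 1 := by
    have h1 : C₀⁻¹ ≤ 1 := by
      rw [inv_le_one_iff₀]; right; exact hC₀1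
    have h2 : (2:ℝ) ^ (-N₀) ≤ 1 :=
      Real.rpow_le_one_of_one_le_of_nonpos one_le_two (by linarith)
    calc c1 ≤ 1 * 1 := by
          apply mul_le_mul h1 h2 (by positivity) zero_le_one
      _ = 1 := one_mul 1
  set δ : ℝ := c1 / 4 with hδ
  have hδpos : 0 < δ := by positivity
  have hδle : δ ≤ 1/4 := by rw [hδ]; linarith
  -- lower bound on nearby radii
  have Llow : ∀ z x : Euc d, dist z x ≤ ρ z → c1 * ρ z ≤ ρ x := by
    intro z x h
    have h1 := (hbd z x).1
    have hz := hρpos z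
    have hu2 : 1 + dist z x / ρ z ≤ 2 := by
      have : dist z x / ρ z ≤ 1 := (div_le_one hz).2 h
      linarith
    have hmono : (2:ℝ) ^ (-N₀) ≤ (1 + dist z x / ρ z) ^ (-N₀) :=
      Real.rpow_le_rpow_of_nonpos (by positivity) hu2 (by linarith)
    calc c1 * ρ z = C₀⁻¹ * ρ z * (2:ℝ) ^ (-N₀) := by rw [hc1]; ring
      _ ≤ C₀⁻¹ * ρ z * (1 + dist z x / ρ z) ^ (-N₀) := by
          apply mul_le_mul_of_nonneg_left hmono (by positivity)
      _ ≤ ρ x := h1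
  -- maximal disjoint family via Zorn
  set f : Euc d → Set (Euc d) := fun p => ball p (δ * ρ p) with hf
  obtain ⟨S, hSmax⟩ : ∃ S, Maximal (· ∈ {T : Set (Euc d) | T.PairwiseDisjoint f}) S := by
    apply zorn_subset
    intro c hcS hchain
    refine ⟨⋃₀ c, ?_, fun s hs => subset_sUnion_of_mem hs⟩
    intro a ha b hb hab
    obtain ⟨s, hs, has⟩ := ha
    obtain ⟨t, ht, hbt⟩ := hb
    rcases hchain.total hs ht with h | h
    · exact hcS ht (h has) hbt hab
    · exact hcS hs has (h hbt) hab
  have hS : S.PairwiseDisjoint f := hSmax.prop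
  -- covering property
  have hcover : ∀ z : Euc d, ∃ p ∈ S, dist z p < ρ p := by
    intro z
    by_cases hz : z ∈ S
    · exact ⟨z, hz, by simpa [dist_self] using hρpos z⟩
    · have hni : ¬ (insert z S).PairwiseDisjoint f := by
        intro h
        exact hz (hSmax.2 h (subset_insert z S) (mem_insert z S))
      rw [Set.pairwiseDisjoint_insert] at hni
      push_neg at hni
      obtain ⟨p, hpS, hpz, hnd⟩ := hni hS
      obtain ⟨w, hw1, hw2⟩ := Set.not_disjoint_iff.1 hnd
      rw [hf, mem_ball] at hw1 hw2
      have hdzp : dist z p < δ * ρ z + δ * ρ p := by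
        calc dist z p ≤ dist z w + dist w p := dist_triangle z w p
          _ < δ * ρ z + δ * ρ p := by
              rw [dist_comm z w]; exact add_lt_add hw1 hw2
      have hz0 := hρpos z; have hp0 := hρpos p
      rcases le_total (ρ z) (ρ p) with h | h
      · exact ⟨p, hpS, by nlinarith⟩
      · have hd1 : dist z p ≤ ρ z := by nlinarith
        have hlow := Llow z p hd1
        refine ⟨p, hpS, ?_⟩
        have : dist z p < 2 * δ * ρ z := by nlinarith
        have h2 : 2 * δ * ρ z = (c1 / 2) * ρ z := by rw [hδ]; ring
        nlinarith
  -- S is countable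
  have hScount : S.Countable :=
    hS.countable_of_isOpen (fun p _ => isOpen_ball)
      (fun p _ => nonempty_ball.2 (mul_pos hδpos (hρpos p)))
  -- S is infinite
  have hSinf : S.Infinite := by
    by_contra h
    rw [Set.not_infinite] at h
    have hsub : (univ : Set (Euc d)) ⊆ ⋃ p ∈ S, ball p (ρ p) := by
      intro z _
      obtain ⟨p, hp, hlt⟩ := hcover z
      exact mem_biUnion hp (mem_ball.2 hlt)
    have hbdd : Bornology.IsBounded (univ : Set (Euc d)) := by
      refine Bornology.IsBounded.subset ?_ hsub
      exact (Bornology.isBounded_biUnion h).2 fun p _ => isBounded_ball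
    exact NormedSpace.unbounded_univ ℝ (Euc d) hbdd
  -- enumerate S
  haveI := hScount.to_subtype
  haveI := hSinf.to_subtype
  obtain ⟨den⟩ : Nonempty (Denumerable ↥S) :=
    nonempty_denumerable_iff.mpr ⟨inferInstance, inferInstance⟩
  set e : ℕ → Euc d := fun n => ((@Denumerable.eqv ↥S den).symm n : Euc d) with he
  have he_inj : Function.Injective e :=
    Subtype.val_injective.comp (Equiv.injective _)
  have he_mem : ∀ n, e n ∈ S := fun n => ((@Denumerable.eqv ↥S den).symm n).2
  have he_surj : ∀ p ∈ S, ∃ n, e n = p := by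
    intro p hp
    exact ⟨(@Denumerable.eqv ↥S den) ⟨p, hp⟩, by simp [he]⟩
  refine ⟨e, ?_, ?_⟩
  · apply eq_univ_of_forall
    intro z
    obtain ⟨p, hp, hlt⟩ := hcover z
    obtain ⟨n, rfl⟩ := he_surj p hp
    exact mem_iUnion.2 ⟨n, mem_ball.2 hlt⟩
  · -- finite overlap
    set E2 : ℝ := (N₀ + 1) ^ 2 with hE2
    have hE2pos : 0 < E2 := by positivity
    set C : ℝ := ((1 + C₀) * C₀ * δ⁻¹ * (2 * C₀) ^ E2) ^ d with hC
    set N₁ : ℝ := E2 * d with hN₁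
    have hdpos : (0:ℝ) < d := by exact_mod_cast Nat.lt_of_lt_of_le Nat.zero_lt_one hd
    have hCpos : 0 < C := by
      rw [hC]; apply pow_pos; positivity
    refine ⟨C, hCpos, N₁, mul_pos hE2pos hdpos, ?_⟩
    intro σ hσ z
    have hσ0 : (0:ℝ) < σ := lt_of_lt_of_le zero_lt_one hσ
    have hz0 := hρpos z
    set A : ℝ := (1 + σ * C₀) ^ (N₀ + 1) with hA
    have hbase1 : (1:ℝ) ≤ 1 + σ * C₀ := by nlinarith
    have hApos : 0 < A := by rw [hA]; positivity
    have hA1 : 1 ≤ A := Real.one_le_rpow hbase1 (by linarith)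
    -- key estimate
    have hKey : ∀ x : Euc d, dist z x < σ * ρ x →
        dist z x ≤ ρ z * A ∧ C₀⁻¹ * A ^ (-N₀) * ρ z ≤ ρ x ∧ ρ x ≤ C₀ * ρ z * A := by
      intro x hx
      set u : ℝ := 1 + dist z x / ρ z with hu
      have hu1 : 1 ≤ u := by
        rw [hu]; have : 0 ≤ dist z x / ρ z := by positivity
        linarith
      have hupos : 0 < u := lt_of_lt_of_le zero_lt_one hu1
      set α : ℝ := N₀ / (N₀ + 1) with hα
      have hα0 : 0 ≤ α := by positivity
      have hα1 : α ≤ 1 := by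
        rw [hα, div_le_one (by linarith)]; linarith
      have hupper : ρ x ≤ C₀ * ρ z * u ^ α := (hbd z x).2
      have huα1 : (1:ℝ) ≤ u ^ α := Real.one_le_rpow hu1 hα0
      have huαpos : 0 < u ^ α := Real.rpow_pos_of_pos hupos α
      -- u ≤ (1 + σ C₀) u^α
      have h2 : u ≤ 1 + σ * C₀ * u ^ α := by
        have hdle : dist z x ≤ σ * C₀ * u ^ α * ρ z := by nlinarith
        rw [hu]
        have : dist z x / ρ z ≤ σ * C₀ * u ^ α := by
          rw [div_le_iff₀ hz0]; exact hdle
        linarith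
      have h1 : u ≤ (1 + σ * C₀) * u ^ α := by nlinarith
      have h4 : u ^ (1 - α) ≤ 1 + σ * C₀ := by
        have hcalc : u ^ (1 - α) * u ^ α = u := by
          rw [← Real.rpow_add hupos]; simp
        apply le_of_mul_le_mul_right _ huαpos
        rw [hcalc]; exact h1
      have huA : u ≤ A := by
        have hexp : (1 - α) * (N₀ + 1) = 1 := by
          rw [hα]; field_simp; ring
        have h5 : (u ^ (1 - α)) ^ (N₀ + 1) ≤ (1 + σ * C₀) ^ (N₀ + 1) :=
          Real.rpow_le_rpow (Real.rpow_nonneg hupos.le _) h4 (by linarith)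
        have h6 : (u ^ (1 - α)) ^ (N₀ + 1) = u := by
          rw [← Real.rpow_mul hupos.le, hexp, Real.rpow_one]
        rw [h6] at h5; rw [hA]; exact h5
      refine ⟨?_, ?_, ?_⟩
      · have h7 : 1 + dist z x / ρ z ≤ A := by rw [hu] at huA; exact huA
        have h8 : dist z x / ρ z ≤ A - 1 := by linarith
        rw [div_le_iff₀ hz0] at h8
        nlinarith
      · have hlow := (hbd z x).1
        have hmono : A ^ (-N₀) ≤ u ^ (-N₀) :=
          Real.rpow_le_rpow_of_nonpos hupos huA (by linarith)
        calc C₀⁻¹ * A ^ (-N₀) * ρ z = C₀⁻¹ * ρ z * A ^ (-N₀) := by ring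
          _ ≤ C₀⁻¹ * ρ z * u ^ (-N₀) := by
              apply mul_le_mul_of_nonneg_left hmono (by positivity)
          _ ≤ ρ x := hlow
      · have huαu : u ^ α ≤ u := by
          calc u ^ α ≤ u ^ (1:ℝ) := Real.rpow_le_rpow_of_exponent_le hu1 hα1
            _ = u := Real.rpow_one u
        calc ρ x ≤ C₀ * ρ z * u ^ α := hupper
          _ ≤ C₀ * ρ z * A := by
              apply mul_le_mul_of_nonneg_left (le_trans huαu huA) (by positivity)
    set r0 : ℝ := C₀⁻¹ * A ^ (-N₀) * ρ z with hr0
    have hr0pos : 0 < r0 := by rw [hr0]; positivity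
    set R₂ : ℝ := (1 + C₀) * A * ρ z with hR₂
    have hR₂pos : 0 < R₂ := by rw [hR₂]; positivity
    have hball_sub : ∀ x : Euc d, dist z x < σ * ρ x →
        ball x (δ * ρ x) ⊆ ball z R₂ := by
      intro x hx w hw
      obtain ⟨hK1, _, hK3⟩ := hKey x hx
      rw [mem_ball] at hw ⊢
      have hx0 := hρpos x
      calc dist w z ≤ dist w x + dist x z := dist_triangle w x z
        _ < δ * ρ x + dist z x := by rw [dist_comm x z]; linarith
        _ ≤ δ * (C₀ * ρ z * A) + ρ z * A := by
            have : δ * ρ x ≤ δ * (C₀ * ρ z * A) :=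
              mul_le_mul_of_nonneg_left hK3 hδpos.le
            linarith
        _ ≤ R₂ := by rw [hR₂]; nlinarith [hApos, hz0, hC₀, hδle]
    -- volume facts
    have hμball : ∀ (x : Euc d) (r : ℝ), 0 ≤ r →
        volume (ball x r) = ENNReal.ofReal (r ^ d) * volume (ball (0:Euc d) 1) := by
      intro x r hr
      rw [Measure.addHaar_ball volume x hr, finrank_euclideanSpace_fin]
    have hμ0 : volume (ball (0:Euc d) 1) ≠ 0 := (measure_ball_pos _ _ one_pos).ne'
    have hμtop : volume (ball (0:Euc d) 1) ≠ ⊤ := measure_ball_lt_top.ne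
    -- the final real-number inequality: R₂ ^ d ≤ (C * σ ^ N₁) * (δ * r0) ^ d
    have hKfact : R₂ = ((1 + C₀) * C₀ * δ⁻¹ * A ^ (N₀ + 1)) * (δ * r0) := by
      have hAA : A ^ (N₀ + 1) * A ^ (-N₀) = A := by
        rw [← Real.rpow_add hApos]
        have h9 : N₀ + 1 + -N₀ = 1 := by ring
        rw [h9, Real.rpow_one]
      rw [hR₂, hr0]
      have h10 : (1 + C₀) * C₀ * δ⁻¹ * A ^ (N₀ + 1) * (δ * (C₀⁻¹ * A ^ (-N₀) * ρ z))
          = (C₀ * C₀⁻¹) * (δ⁻¹ * δ) * (A ^ (N₀ + 1) * A ^ (-N₀)) * ((1 + C₀) * ρ z) := by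
        ring
      rw [h10, hAA, mul_inv_cancel₀ hC₀.ne', inv_mul_cancel₀ hδpos.ne']
      ring
    have hKbound : (1 + C₀) * C₀ * δ⁻¹ * A ^ (N₀ + 1) ≤
        (1 + C₀) * C₀ * δ⁻¹ * (2 * C₀) ^ E2 * σ ^ E2 := by
      have hAN : A ^ (N₀ + 1) = (1 + σ * C₀) ^ E2 := by
        rw [hA, ← Real.rpow_mul (by linarith : (0:ℝ) ≤ 1 + σ * C₀), hE2]
        congr 1
        ring
      have hbb : 1 + σ * C₀ ≤ 2 * C₀ * σ := by nlinarith
      have h11 : (1 + σ * C₀) ^ E2 ≤ (2 * C₀ * σ) ^ E2 :=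
        Real.rpow_le_rpow (by linarith) hbb hE2pos.le
      have h12 : (2 * C₀ * σ) ^ E2 = (2 * C₀) ^ E2 * σ ^ E2 :=
        Real.mul_rpow (by positivity) hσ0.le
      have h13 : (1 + σ * C₀) ^ E2 ≤ (2 * C₀) ^ E2 * σ ^ E2 := by rw [← h12]; exact h11
      have hposK : (0:ℝ) ≤ (1 + C₀) * C₀ * δ⁻¹ := by positivity
      rw [hAN]
      calc (1 + C₀) * C₀ * δ⁻¹ * (1 + σ * C₀) ^ E2
          ≤ (1 + C₀) * C₀ * δ⁻¹ * ((2 * C₀) ^ E2 * σ ^ E2) :=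
            mul_le_mul_of_nonneg_left h13 hposK
        _ = (1 + C₀) * C₀ * δ⁻¹ * (2 * C₀) ^ E2 * σ ^ E2 := by ring
    -- main real inequality
    have hreal : R₂ ^ d ≤ (C * σ ^ N₁) * (δ * r0) ^ d := by
      have hK0 : (0:ℝ) ≤ (1 + C₀) * C₀ * δ⁻¹ * A ^ (N₀ + 1) := by positivity
      have hδr0 : (0:ℝ) ≤ δ * r0 := by positivity
      have h13 : R₂ ^ d = ((1 + C₀) * C₀ * δ⁻¹ * A ^ (N₀ + 1)) ^ d * (δ * r0) ^ d := by
        rw [hKfact, mul_pow]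
      rw [h13]
      apply mul_le_mul_of_nonneg_right _ (pow_nonneg hδr0 d)
      have h14 : ((1 + C₀) * C₀ * δ⁻¹ * A ^ (N₀ + 1)) ^ d
          ≤ ((1 + C₀) * C₀ * δ⁻¹ * (2 * C₀) ^ E2 * σ ^ E2) ^ d :=
        pow_le_pow_left₀ hK0 hKbound d
      have h15 : ((1 + C₀) * C₀ * δ⁻¹ * (2 * C₀) ^ E2 * σ ^ E2) ^ d
          = C * (σ ^ E2) ^ d := by rw [hC, mul_pow]
      have h16 : (σ ^ E2) ^ d = σ ^ N₁ := by
        rw [← Real.rpow_natCast (σ ^ E2) d, ← Real.rpow_mul hσ0.le, hN₁]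
      calc ((1 + C₀) * C₀ * δ⁻¹ * A ^ (N₀ + 1)) ^ d
          ≤ ((1 + C₀) * C₀ * δ⁻¹ * (2 * C₀) ^ E2 * σ ^ E2) ^ d := h14
        _ = C * σ ^ N₁ := by rw [h15, h16]
    -- counting
    apply Summable.tsum_le_of_sum_le ENNReal.summable
    intro F
    set F' : Finset ℕ := F.filter (fun j => z ∈ ball (e j) (σ * ρ (e j))) with hF'
    have hsum : (∑ j ∈ F, Set.indicator (ball (e j) (σ * ρ (e j))) (fun _ => (1:ℝ≥0∞)) z)
        = (F'.card : ℝ≥0∞) := by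
      rw [hF']
      simp [Set.indicator_apply, Finset.sum_boole]
    have hmem' : ∀ j ∈ F', dist z (e j) < σ * ρ (e j) := by
      intro j hj
      have h := (Finset.mem_filter.1 hj).2
      rwa [mem_ball] at h
    have hdisj : (↑F' : Set ℕ).PairwiseDisjoint (fun j => ball (e j) (δ * ρ (e j))) := by
      intro i _ j _ hij
      exact hS (he_mem i) (he_mem j) (fun hc => hij (he_inj hc))
    have hub : ∑ j ∈ F', volume (ball (e j) (δ * ρ (e j))) ≤ volume (ball z R₂) := by
      rw [← measure_biUnion_finset hdisj (fun j _ => measurableSet_ball)]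
      apply measure_mono
      apply Set.iUnion₂_subset
      intro j hj
      exact hball_sub (e j) (hmem' j hj)
    have hlb : ∀ j ∈ F', ENNReal.ofReal ((δ * r0) ^ d) * volume (ball (0:Euc d) 1)
        ≤ volume (ball (e j) (δ * ρ (e j))) := by
      intro j hj
      have hr := (hKey (e j) (hmem' j hj)).2.1
      have hρj := hρpos (e j)
      rw [hμball (e j) _ (by positivity)]
      apply mul_le_mul_left (ENNReal.ofReal_le_ofReal _)
      apply pow_le_pow_left₀ (by positivity)
      nlinarith
    have hcount : (F'.card : ℝ≥0∞) * (ENNReal.ofReal ((δ * r0) ^ d) * volume (ball (0:Euc d) 1))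
        ≤ ENNReal.ofReal (R₂ ^ d) * volume (ball (0:Euc d) 1) := by
      calc (F'.card : ℝ≥0∞) * (ENNReal.ofReal ((δ * r0) ^ d) * volume (ball (0:Euc d) 1))
          = ∑ _j ∈ F', (ENNReal.ofReal ((δ * r0) ^ d) * volume (ball (0:Euc d) 1)) := by
            rw [Finset.sum_const, nsmul_eq_mul]
        _ ≤ ∑ j ∈ F', volume (ball (e j) (δ * ρ (e j))) := Finset.sum_le_sum hlb
        _ ≤ volume (ball z R₂) := hub
        _ = ENNReal.ofReal (R₂ ^ d) * volume (ball (0:Euc d) 1) := hμball z R₂ hR₂pos.le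
    have hcount2 : (F'.card : ℝ≥0∞) * ENNReal.ofReal ((δ * r0) ^ d)
        ≤ ENNReal.ofReal (R₂ ^ d) := by
      rw [← ENNReal.mul_le_mul_iff_left hμ0 hμtop, mul_assoc]
      exact hcount
    have hcount3 : (F'.card : ℝ) * (δ * r0) ^ d ≤ R₂ ^ d := by
      have h17 : ((F'.card : ℝ≥0∞)) = ENNReal.ofReal ((F'.card : ℝ)) := by simp
      rw [h17, ← ENNReal.ofReal_mul (by positivity)] at hcount2
      exact (ENNReal.ofReal_le_ofReal_iff (by positivity)).1 hcount2
    have hfinal : (F'.card : ℝ) ≤ C * σ ^ N₁ := by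
      have hpow : (0:ℝ) < (δ * r0) ^ d := by positivity
      exact le_of_mul_le_mul_right (le_trans hcount3 hreal) hpow
    calc (∑ j ∈ F, Set.indicator (ball (e j) (σ * ρ (e j))) (fun _ => (1:ℝ≥0∞)) z)
        = (F'.card : ℝ≥0∞) := hsum
      _ = ENNReal.ofReal ((F'.card : ℝ)) := by simp
      _ ≤ ENNReal.ofReal (C * σ ^ N₁) := ENNReal.ofReal_le_ofReal hfinal
end
end

section
/- Let d ≥ 3 and let V ∈ RH_q for some q > d/2, with V not identically zero, and let ρ be the associated critical radius function ρ(x) = sup{r > 0 : r^{2−d} ∫_{B(x,r)} V ≤ 1} (which is finite and positive at every point). Then there exist constants C > 0 and N > 0 such that for every x₀ ∈ ℝ^d and every R > 0, R^{2−d} ∫_{B(x₀,R)} V(y) dy ≤ C (1 + R/ρ(x₀))^{N} (1 + ρ(x₀)/R)^{d/q − 2}. -/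
open MeasureTheory Metric Set
open scoped ENNReal NNReal

noncomputable section

/-- A nonnegative function `V` is in the reverse Hölder class `RH_q`:
`V ≥ 0`, `V` and `V^q` are locally integrable, and
`((1/|B|)∫_B V^q)^{1/q} ≤ C (1/|B|)∫_B V` for every ball `B`. -/
def IsRH {d : ℕ} (q : ℝ) (V : Euc d → ℝ) : Prop :=
  (∀ x, 0 ≤ V x) ∧ LocallyIntegrable V volume ∧
    LocallyIntegrable (fun x => V x ^ q) volume ∧
  ∃ C > (0:ℝ), ∀ (c : Euc d) (r : ℝ), 0 < r →
    ((∫ y in ball c r, V y ^ q) / (volume (ball c r)).toReal) ^ (1 / q) ≤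
      C * ((∫ y in ball c r, V y) / (volume (ball c r)).toReal)

set_option maxHeartbeats 1600000 in
/-- Lemma on `V ∈ RH_q`, `q > d/2`: with
`ρ(x) = sup{r > 0 : r^{2-d} ∫_{B(x,r)} V ≤ 1}` finite and positive, there exist `C, N > 0`
such that for every `x₀` and `R > 0`,
`R^{2-d} ∫_{B(x₀,R)} V ≤ C (1+R/ρ(x₀))^N (1+ρ(x₀)/R)^{d/q-2}`. -/
theorem stmt15 {d : ℕ} (hd : 3 ≤ d) (q : ℝ) (hq : (d : ℝ) / 2 < q)
    (V : Euc d → ℝ) (hV : IsRH q V) (hV0 : ¬ (V =ᵐ[(volume : Measure (Euc d))] 0))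
    (ρ : Euc d → ℝ)
    (hρdef : ∀ x, ρ x =
      sSup {r : ℝ | 0 < r ∧ (∫ y in ball x r, V y) ≤ r ^ ((d : ℝ) - 2)})
    (hρpos : ∀ x, 0 < ρ x) :
    ∃ C > (0:ℝ), ∃ N > (0:ℝ), ∀ (x₀ : Euc d) (R : ℝ), 0 < R →
      R ^ ((2:ℝ) - (d:ℝ)) * ∫ y in ball x₀ R, V y ≤
        C * (1 + R / ρ x₀) ^ N * (1 + ρ x₀ / R) ^ ((d : ℝ) / q - 2) := by
  classical
  obtain ⟨hVnn, hVloc, hVqloc, C₁, hC₁, hRH⟩ := hV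
  clear hV0
  have hd0 : 0 < d := by omega
  have hd3 : (3:ℝ) ≤ (d:ℝ) := by exact_mod_cast hd
  have hq1 : 1 < q := by nlinarith
  have hq0 : 0 < q := by linarith
  have hqinv : 1/q < 1 := by rw [div_lt_one hq0]; linarith
  have hq' : 0 < 1 - 1/q := by linarith
  have hdq : 0 ≤ (d:ℝ)/q := by positivity
  have he2 : 0 < 2 - (d:ℝ)/q := by
    have : (d:ℝ)/q < 2 := by rw [div_lt_iff₀ hq0]; linarith
    linarith
  have he2' : 2 - (d:ℝ)/q ≤ 2 := by linarith
  set u := (volume (ball (0:Euc d) 1)).toReal with hu_def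
  have hu : 0 < u :=
    ENNReal.toReal_pos (measure_ball_pos volume _ one_pos).ne' measure_ball_lt_top.ne
  have hvol : ∀ (c : Euc d) {t : ℝ}, 0 < t → (volume (ball c t)).toReal = t ^ d * u := by
    intro c t ht
    rw [Measure.addHaar_ball_of_pos (volume : Measure (Euc d)) c ht, ENNReal.toReal_mul,
      ENNReal.toReal_ofReal (by positivity), finrank_euclideanSpace_fin]
  have hvolpos : ∀ (c : Euc d) {t : ℝ}, 0 < t → 0 < (volume (ball c t)).toReal := by
    intro c t ht; rw [hvol c ht]; positivity
  have hVint : ∀ (c : Euc d) (t : ℝ), IntegrableOn V (ball c t) volume := fun c t =>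
    (hVloc.integrableOn_isCompact (isCompact_closedBall c t)).mono_set ball_subset_closedBall
  have hVqint : ∀ (c : Euc d) (t : ℝ), IntegrableOn (fun x => V x ^ q) (ball c t) volume :=
    fun c t =>
    (hVqloc.integrableOn_isCompact (isCompact_closedBall c t)).mono_set ball_subset_closedBall
  have hInn : ∀ (c : Euc d) (t : ℝ), 0 ≤ ∫ y in ball c t, V y := fun c t =>
    setIntegral_nonneg measurableSet_ball fun y _ => hVnn y
  have hImono : ∀ (c : Euc d) {t' t : ℝ}, t' ≤ t →
      (∫ y in ball c t', V y) ≤ ∫ y in ball c t, V y := by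
    intro c t' t h
    exact setIntegral_mono_set (hVint c t) (Filter.Eventually.of_forall fun y => hVnn y)
      ((ball_subset_ball h).eventuallyLE)
  -- Hölder inequality on a set of finite measure
  have holder : ∀ (E : Set (Euc d)), MeasurableSet E → volume E ≠ ⊤ →
      IntegrableOn (fun x => V x ^ q) E volume →
      (∫ x in E, V x) ≤ (∫ x in E, V x ^ q) ^ (1/q) * ((volume E).toReal) ^ (1 - 1/q) := by
    intro E hE hEfin hVqE
    haveI : IsFiniteMeasure (volume.restrict E) :=
      ⟨by rw [Measure.restrict_apply_univ]; exact lt_top_iff_ne_top.2 hEfin⟩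
    have hconj : q.HolderConjugate q.conjExponent := Real.HolderConjugate.conjExponent hq1
    have hmeasV : AEStronglyMeasurable V (volume.restrict E) :=
      hVloc.aestronglyMeasurable.restrict
    have hmemV : MemLp V (ENNReal.ofReal q) (volume.restrict E) := by
      rw [← memLp_norm_rpow_iff (q := ENNReal.ofReal q) hmeasV
        (ENNReal.ofReal_pos.mpr hq0).ne' ENNReal.ofReal_ne_top,
        ENNReal.div_self (ENNReal.ofReal_pos.mpr hq0).ne' ENNReal.ofReal_ne_top,
        memLp_one_iff_integrable, ENNReal.toReal_ofReal hq0.le]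
      refine hVqE.integrable.congr ?_
      exact Filter.Eventually.of_forall fun x => by
        simp only [Real.norm_eq_abs, abs_of_nonneg (hVnn x)]
    have hmem1 : MemLp (fun _ : Euc d => (1:ℝ)) (ENNReal.ofReal q.conjExponent)
        (volume.restrict E) := memLp_const 1
    have H := integral_mul_le_Lp_mul_Lq_of_nonneg hconj
      (Filter.Eventually.of_forall fun x => hVnn x) (Filter.Eventually.of_forall fun _ => zero_le_one)
      hmemV hmem1
    simp only [mul_one, Real.one_rpow] at H
    rw [integral_const, measureReal_restrict_apply_univ, measureReal_def, smul_eq_mul, mul_one] at H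
    have hce : 1 / q.conjExponent = 1 - 1/q := by
      rw [Real.conjExponent, one_div_div]
      field_simp
    rwa [hce] at H
  -- key estimate for subsets of balls
  have key : ∀ (c : Euc d) (t : ℝ), 0 < t → ∀ E : Set (Euc d), MeasurableSet E →
      E ⊆ ball c t →
      (∫ x in E, V x) ≤
        C₁ * (((volume E).toReal / (volume (ball c t)).toReal) ^ (1 - 1/q)) *
          ∫ y in ball c t, V y := by
    intro c t ht E hE hsub
    have hvb : 0 < (volume (ball c t)).toReal := hvolpos c ht
    have hEfin : volume E ≠ ⊤ := (lt_of_le_of_lt (measure_mono hsub) measure_ball_lt_top).ne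
    have hEqnn : 0 ≤ ∫ x in E, V x ^ q :=
      setIntegral_nonneg hE fun y _ => Real.rpow_nonneg (hVnn y) q
    have hEq : (∫ x in E, V x ^ q) ≤ ∫ x in ball c t, V x ^ q :=
      setIntegral_mono_set (hVqint c t)
        (Filter.Eventually.of_forall fun y => Real.rpow_nonneg (hVnn y) q) hsub.eventuallyLE
    have hRH' := hRH c t ht
    set vb := (volume (ball c t)).toReal with hvb_def
    set I := ∫ y in ball c t, V y with hI_def
    set Iq := ∫ y in ball c t, V y ^ q with hIq_def
    have hIqnn : 0 ≤ Iq :=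
      setIntegral_nonneg measurableSet_ball fun y _ => Real.rpow_nonneg (hVnn y) q
    have step1 : Iq ^ (1/q) ≤ C₁ * (I / vb) * vb ^ (1/q) := by
      have h1 : Iq ^ (1/q) = (Iq / vb) ^ (1/q) * vb ^ (1/q) := by
        rw [← Real.mul_rpow (by positivity) hvb.le, div_mul_cancel₀ _ hvb.ne']
      rw [h1]
      exact mul_le_mul_of_nonneg_right hRH' (Real.rpow_nonneg hvb.le _)
    have hbridge : vb ^ ((1:ℝ)/q) = vb * (vb ^ (1 - 1/q))⁻¹ := by
      rw [← Real.rpow_neg hvb.le,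
        show vb * vb ^ (-(1 - 1/q)) = vb ^ (1:ℝ) * vb ^ (-(1 - 1/q)) by rw [Real.rpow_one],
        ← Real.rpow_add hvb]
      congr 1; ring
    calc (∫ x in E, V x)
        ≤ (∫ x in E, V x ^ q) ^ (1/q) * ((volume E).toReal) ^ (1 - 1/q) :=
          holder E hE hEfin ((hVqint c t).mono_set hsub)
      _ ≤ Iq ^ (1/q) * ((volume E).toReal) ^ (1 - 1/q) :=
          mul_le_mul_of_nonneg_right
            (Real.rpow_le_rpow hEqnn hEq (by positivity))
            (Real.rpow_nonneg ENNReal.toReal_nonneg _)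
      _ ≤ (C₁ * (I / vb) * vb ^ (1/q)) * ((volume E).toReal) ^ (1 - 1/q) :=
          mul_le_mul_of_nonneg_right step1 (Real.rpow_nonneg ENNReal.toReal_nonneg _)
      _ = C₁ * (((volume E).toReal / vb) ^ (1 - 1/q)) * I := by
          rw [Real.div_rpow ENNReal.toReal_nonneg hvb.le, hbridge]
          have h2 : (vb:ℝ) ^ (1 - 1/q) ≠ 0 := by positivity
          field_simp
  -- small ball estimate
  have hsmall : ∀ (c : Euc d) (t' t : ℝ), 0 < t' → t' ≤ t →
      (∫ y in ball c t', V y) ≤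
        C₁ * (t'/t) ^ ((d:ℝ) - (d:ℝ)/q) * ∫ y in ball c t, V y := by
    intro c t' t ht' htt
    have ht : 0 < t := lt_of_lt_of_le ht' htt
    have hkey := key c t ht (ball c t') measurableSet_ball (ball_subset_ball htt)
    have hrat : (volume (ball c t')).toReal / (volume (ball c t)).toReal = (t'/t) ^ d := by
      rw [hvol c ht', hvol c ht, div_pow, mul_div_mul_right _ _ hu.ne']
    rw [hrat] at hkey
    have hexp : ((t'/t : ℝ) ^ d) ^ (1 - 1/q) = (t'/t) ^ ((d:ℝ) - (d:ℝ)/q) := by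
      rw [← Real.rpow_natCast (t'/t) d, ← Real.rpow_mul (by positivity)]
      congr 1; ring
    rwa [hexp] at hkey
  -- choose the annulus parameter
  set a : ℝ := min (1/2) ((2*C₁)⁻¹ ^ (1 - 1/q)⁻¹) with ha_def
  have ha0 : 0 < a := lt_min (by norm_num) (Real.rpow_pos_of_pos (by positivity) _)
  have ha1 : a ≤ 1/2 := min_le_left _ _
  have haC : C₁ * a ^ (1 - 1/q) ≤ 1/2 := by
    have h1 : a ^ (1 - 1/q) ≤ ((2*C₁)⁻¹ ^ (1 - 1/q)⁻¹) ^ (1 - 1/q) :=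
      Real.rpow_le_rpow ha0.le (min_le_right _ _) hq'.le
    rw [← Real.rpow_mul (by positivity), inv_mul_cancel₀ hq'.ne', Real.rpow_one] at h1
    calc C₁ * a ^ (1 - 1/q) ≤ C₁ * (2*C₁)⁻¹ :=
          mul_le_mul_of_nonneg_left h1 hC₁.le
      _ = 1/2 := by field_simp
  -- the dilation parameter σ
  set σ : ℝ := (1 - a) ^ ((d:ℝ)⁻¹) with hσ_def
  have h1a0 : 0 < 1 - a := by linarith
  have h1a1 : 1 - a < 1 := by linarith
  have hσ0 : 0 < σ := Real.rpow_pos_of_pos h1a0 _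
  have hσ1 : σ < 1 := Real.rpow_lt_one h1a0.le h1a1 (by positivity)
  have hσd : σ ^ d = 1 - a := by
    rw [hσ_def, ← Real.rpow_natCast ((1-a) ^ ((d:ℝ)⁻¹)) d, ← Real.rpow_mul h1a0.le,
      inv_mul_cancel₀ (by positivity : (d:ℝ) ≠ 0), Real.rpow_one]
  -- one-step doubling
  have hdbl : ∀ (c : Euc d) (t : ℝ), 0 < t →
      (∫ y in ball c t, V y) ≤ 2 * ∫ y in ball c (σ * t), V y := by
    intro c t ht
    have hσt : 0 < σ * t := by positivity
    have hsub : ball c (σ*t) ⊆ ball c t := ball_subset_ball (by nlinarith)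
    have hsplit : (∫ y in ball c t \ ball c (σ*t), V y)
        = (∫ y in ball c t, V y) - ∫ y in ball c (σ*t), V y :=
      integral_diff measurableSet_ball (hVint c t) hsub
    have hvd : (volume (ball c t \ ball c (σ*t))).toReal = a * (volume (ball c t)).toReal := by
      rw [measure_diff hsub measurableSet_ball.nullMeasurableSet measure_ball_lt_top.ne,
        ENNReal.toReal_sub_of_le (measure_mono hsub) measure_ball_lt_top.ne,
        hvol c ht, hvol c hσt, mul_pow, hσd]
      ring
    have hkey := key c t ht (ball c t \ ball c (σ*t))
      (measurableSet_ball.diff measurableSet_ball) diff_subset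
    rw [hvd, mul_div_assoc, div_self (hvolpos c ht).ne', mul_one] at hkey
    rw [hsplit] at hkey
    have hIt := hInn c t
    have h2 : C₁ * a ^ (1 - 1/q) * (∫ y in ball c t, V y) ≤
        (1/2) * ∫ y in ball c t, V y :=
      mul_le_mul_of_nonneg_right haC hIt
    linarith
  -- iterated doubling
  have hiter : ∀ (k : ℕ) (c : Euc d) (t : ℝ), 0 < t →
      (∫ y in ball c t, V y) ≤ 2 ^ k * ∫ y in ball c (σ ^ k * t), V y := by
    intro k
    induction k with
    | zero => intro c t ht; simp
    | succ n ih =>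
      intro c t ht
      have h1 := ih c t ht
      have h2 := hdbl c (σ ^ n * t) (by positivity)
      have h3 : σ * (σ ^ n * t) = σ ^ (n+1) * t := by ring
      rw [h3] at h2
      calc (∫ y in ball c t, V y) ≤ 2 ^ n * ∫ y in ball c (σ ^ n * t), V y := h1
        _ ≤ 2 ^ n * (2 * ∫ y in ball c (σ ^ (n+1) * t), V y) :=
            mul_le_mul_of_nonneg_left h2 (by positivity)
        _ = 2 ^ (n+1) * ∫ y in ball c (σ ^ (n+1) * t), V y := by ring
  -- full doubling with power gain
  have hinv1 : 1 < σ⁻¹ := (one_lt_inv_iff₀).mpr ⟨hσ0, hσ1⟩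
  have hlogσ : 0 < Real.log σ⁻¹ := Real.log_pos hinv1
  set M : ℝ := Real.log 2 / Real.log σ⁻¹ with hM_def
  have hM0 : 0 < M := div_pos (Real.log_pos one_lt_two) hlogσ
  set M' : ℝ := max M (d:ℝ) with hM'_def
  have hM'M : M ≤ M' := le_max_left _ _
  have hM'd : (d:ℝ) ≤ M' := le_max_right _ _
  have hdouble : ∀ (c : Euc d) (t' t : ℝ), 0 < t' → t' ≤ t →
      (∫ y in ball c t, V y) ≤ 2 * (t/t') ^ M' * ∫ y in ball c t', V y := by
    intro c t' t ht' htt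
    have ht : 0 < t := lt_of_lt_of_le ht' htt
    have hrat1 : 1 ≤ t / t' := (one_le_div ht').mpr htt
    have hlgnn : 0 ≤ Real.log (t/t') := Real.log_nonneg hrat1
    set k : ℕ := ⌈Real.log (t/t') / Real.log σ⁻¹⌉₊ with hk_def
    have hlg : Real.log (t/t') ≤ (k:ℝ) * Real.log σ⁻¹ := by
      have h := Nat.le_ceil (Real.log (t/t') / Real.log σ⁻¹)
      rw [div_le_iff₀ hlogσ] at h
      exact h
    have hσk : σ ^ k * t ≤ t' := by
      have h2 : t/t' ≤ σ⁻¹ ^ k := by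
        have h3 := Real.exp_le_exp.mpr hlg
        rw [Real.exp_log (div_pos ht ht'), Real.exp_nat_mul,
          Real.exp_log (by positivity : (0:ℝ) < σ⁻¹)] at h3
        exact h3
      rw [div_le_iff₀ ht'] at h2
      calc σ ^ k * t ≤ σ ^ k * (σ⁻¹ ^ k * t') :=
            mul_le_mul_of_nonneg_left h2 (by positivity)
        _ = t' := by
            rw [← mul_assoc, ← mul_pow, mul_inv_cancel₀ hσ0.ne', one_pow, one_mul]
    have h2k : (2:ℝ) ^ k ≤ 2 * (t/t') ^ M := by
      have hkub : (k:ℝ) ≤ Real.log (t/t') / Real.log σ⁻¹ + 1 :=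
        (Nat.ceil_lt_add_one (div_nonneg hlgnn hlogσ.le)).le
      have e1 : Real.exp ((k:ℝ) * Real.log 2) = 2 ^ k := by
        rw [Real.exp_nat_mul, Real.exp_log two_pos]
      have e2 : Real.exp ((Real.log (t/t') / Real.log σ⁻¹ + 1) * Real.log 2)
          = 2 * (t/t') ^ M := by
        rw [add_mul, one_mul, Real.exp_add, Real.exp_log two_pos,
          Real.rpow_def_of_pos (div_pos ht ht')]
        rw [mul_comm]
        congr 1
        rw [hM_def]
        ring
      calc (2:ℝ) ^ k = Real.exp ((k:ℝ) * Real.log 2) := e1.symm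
        _ ≤ Real.exp ((Real.log (t/t') / Real.log σ⁻¹ + 1) * Real.log 2) :=
            Real.exp_le_exp.mpr
              (mul_le_mul_of_nonneg_right hkub (Real.log_nonneg one_le_two))
        _ = 2 * (t/t') ^ M := e2
    have hMM' : (t/t') ^ M ≤ (t/t') ^ M' :=
      Real.rpow_le_rpow_of_exponent_le hrat1 hM'M
    calc (∫ y in ball c t, V y) ≤ 2 ^ k * ∫ y in ball c (σ ^ k * t), V y := hiter k c t ht
      _ ≤ 2 ^ k * ∫ y in ball c t', V y :=
          mul_le_mul_of_nonneg_left (hImono c hσk) (by positivity)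
      _ ≤ (2 * (t/t') ^ M) * ∫ y in ball c t', V y :=
          mul_le_mul_of_nonneg_right h2k (hInn c t')
      _ ≤ (2 * (t/t') ^ M') * ∫ y in ball c t', V y := by
          have h5 := mul_le_mul_of_nonneg_right hMM' (hInn c t')
          linarith
  -- constants
  set N : ℝ := M' - (d:ℝ) + 2 with hN_def
  have hN : 0 < N := by rw [hN_def]; linarith
  set P : ℝ := (2:ℝ) ^ N with hP_def
  have hP : 0 < P := Real.rpow_pos_of_pos two_pos _
  have h24 : (2:ℝ) ^ ((2:ℝ) - (d:ℝ)/q) ≤ 4 := by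
    have h1 : (2:ℝ) ^ ((2:ℝ) - (d:ℝ)/q) ≤ (2:ℝ) ^ (2:ℝ) :=
      Real.rpow_le_rpow_of_exponent_le one_le_two he2'
    have h2 : (2:ℝ) ^ (2:ℝ) = 4 := by
      rw [show (2:ℝ) = ((2:ℕ):ℝ) by norm_num, Real.rpow_natCast]
      norm_num
    linarith
  refine ⟨32 * P + 16 * C₁, by positivity, N, hN, ?_⟩
  intro x₀ R hR
  set ρ₀ := ρ x₀ with hρ₀_def
  have hρ0 : 0 < ρ₀ := hρpos x₀
  set A : ℝ := (1 + R / ρ₀) ^ N with hA_def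
  set B : ℝ := (1 + ρ₀ / R) ^ ((d:ℝ)/q - 2) with hB_def
  have hCnn : (0:ℝ) ≤ 32 * P + 16 * C₁ := by positivity
  -- find a near-critical radius r
  have hSdef := hρdef x₀
  rw [← hρ₀_def] at hSdef
  set S := {r : ℝ | 0 < r ∧ (∫ y in ball x₀ r, V y) ≤ r ^ ((d : ℝ) - 2)} with hS_def
  have hSne : S.Nonempty := by
    by_contra h
    rw [not_nonempty_iff_eq_empty] at h
    have h0 : ρ₀ = 0 := by rw [hSdef, h, Real.sSup_empty]
    linarith
  have hSbdd : BddAbove S := by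
    by_contra h
    have h0 : ρ₀ = 0 := by rw [hSdef, Real.sSup_of_not_bddAbove h]
    linarith
  obtain ⟨r, hrS, hrhalf⟩ : ∃ r ∈ S, ρ₀ / 2 < r := by
    apply exists_lt_of_lt_csSup hSne
    rw [← hSdef]
    linarith
  have hrρ : r ≤ ρ₀ := by
    rw [hSdef]
    exact le_csSup hSbdd hrS
  obtain ⟨hr0, hrI⟩ := hrS
  -- basic facts about A and B
  have hA1 : (1:ℝ) ≤ 1 + R / ρ₀ := by
    have : 0 ≤ R / ρ₀ := by positivity
    linarith
  have hAlb : (1:ℝ) ≤ A := by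
    have := Real.rpow_le_rpow zero_le_one hA1 hN.le
    rwa [Real.one_rpow] at this
  have hAnn : 0 ≤ A := by linarith
  have hBnn : 0 ≤ B := Real.rpow_nonneg (by positivity) _
  -- fraction identity
  have hfrac : ∀ {R' r' : ℝ}, 0 < R' → 0 < r' →
      R' ^ ((2:ℝ) - (d:ℝ)) * r' ^ ((d:ℝ) - 2) = (R'/r') ^ ((2:ℝ) - (d:ℝ)) := by
    intro R' r' hR' hr'
    rw [show ((d:ℝ) - 2) = -((2:ℝ) - (d:ℝ)) by ring, Real.rpow_neg hr'.le,
      Real.div_rpow hR'.le hr'.le, div_eq_mul_inv]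
  -- the main bound for R ≥ r
  have hh : r ≤ R → R ^ ((2:ℝ) - (d:ℝ)) * (∫ y in ball x₀ R, V y) ≤ 2 * (R/r) ^ N := by
    intro hrR
    have hdd := hdouble x₀ r R hr0 hrR
    have hRr : 0 < R / r := by positivity
    have hexpN : M' + ((2:ℝ) - (d:ℝ)) = N := by rw [hN_def]; ring
    have hRnn : 0 ≤ R ^ ((2:ℝ) - (d:ℝ)) := Real.rpow_nonneg hR.le _
    calc R ^ ((2:ℝ) - (d:ℝ)) * (∫ y in ball x₀ R, V y)
        ≤ R ^ ((2:ℝ) - (d:ℝ)) * (2 * (R/r) ^ M' * ∫ y in ball x₀ r, V y) :=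
          mul_le_mul_of_nonneg_left hdd hRnn
      _ ≤ R ^ ((2:ℝ) - (d:ℝ)) * (2 * (R/r) ^ M' * r ^ ((d:ℝ) - 2)) := by
          have h1 : (0:ℝ) ≤ 2 * (R/r) ^ M' := by positivity
          exact mul_le_mul_of_nonneg_left (mul_le_mul_of_nonneg_left hrI h1) hRnn
      _ = 2 * ((R/r) ^ M' * (R ^ ((2:ℝ) - (d:ℝ)) * r ^ ((d:ℝ) - 2))) := by ring
      _ = 2 * ((R/r) ^ M' * (R/r) ^ ((2:ℝ) - (d:ℝ))) := by rw [hfrac hR hr0]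
      _ = 2 * (R/r) ^ (M' + ((2:ℝ) - (d:ℝ))) := by rw [← Real.rpow_add hRr]
      _ = 2 * (R/r) ^ N := by
          rw [hexpN]
  have hRr2ρ : R / r ≤ 2 * (R / ρ₀) := by
    have h1 : R / r ≤ R / (ρ₀/2) := by
      gcongr <;> first
        | exact hR.le
        | positivity
        | linarith
    have h2 : R / (ρ₀/2) = 2 * (R / ρ₀) := by
      field_simp
      try ring
    linarith
  by_cases hcase : ρ₀ ≤ R
  · -- supercritical case
    have hrR : r ≤ R := le_trans hrρ hcase
    have hh1 := hh hrR
    have hRr2 : R / r ≤ 2 * (1 + R / ρ₀) := by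
      have h3 : R / ρ₀ ≤ 1 + R / ρ₀ := by linarith
      linarith
    have hfin1 : (R/r) ^ N ≤ P * A := by
      calc (R/r) ^ N ≤ (2 * (1 + R / ρ₀)) ^ N :=
            Real.rpow_le_rpow (by positivity) hRr2 hN.le
        _ = P * A := by
            rw [Real.mul_rpow (by norm_num) (by positivity : (0:ℝ) ≤ 1 + R / ρ₀),
              ← hP_def, ← hA_def]
    have hBlb : (1/4:ℝ) ≤ B := by
      have h2 : 1 + ρ₀ / R ≤ 2 := by
        have : ρ₀ / R ≤ 1 := (div_le_one hR).mpr hcase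
        linarith
      have h3 : (2:ℝ) ^ ((d:ℝ)/q - 2) ≤ (1 + ρ₀ / R) ^ ((d:ℝ)/q - 2) :=
        Real.rpow_le_rpow_of_nonpos (by positivity) h2 (by linarith)
      have h5 : (2:ℝ) ^ (-(2:ℝ)) ≤ (2:ℝ) ^ ((d:ℝ)/q - 2) :=
        Real.rpow_le_rpow_of_exponent_le one_le_two (by linarith)
      have h6 : (2:ℝ) ^ (-(2:ℝ)) = 1/4 := by
        rw [Real.rpow_neg (by norm_num), show (2:ℝ) = ((2:ℕ):ℝ) by norm_num,
          Real.rpow_natCast]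
        norm_num
      rw [hB_def]
      linarith
    calc R ^ ((2:ℝ) - (d:ℝ)) * (∫ y in ball x₀ R, V y)
        ≤ 2 * (R/r) ^ N := hh1
      _ ≤ 2 * (P * A) := by linarith
      _ ≤ (32 * P + 16 * C₁) * A * B := by
          have t1 : ((32 * P + 16 * C₁) * A) * (1/4) ≤ ((32 * P + 16 * C₁) * A) * B :=
            mul_le_mul_of_nonneg_left hBlb (by positivity)
          have t2 : 0 ≤ P * A := mul_nonneg hP.le hAnn
          have t3 : 0 ≤ C₁ * A := mul_nonneg hC₁.le hAnn
          linarith [t1, t2, t3]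
  · -- subcritical case
    push_neg at hcase
    set X : ℝ := (R / ρ₀) ^ ((2:ℝ) - (d:ℝ)/q) with hX_def
    have hX : 0 < X := Real.rpow_pos_of_pos (by positivity) _
    have hBlbX : (1/4) * X ≤ B := by
      have hρR1 : 1 ≤ ρ₀ / R := (one_le_div hR).mpr hcase.le
      have h1 : 1 + ρ₀ / R ≤ 2 * (ρ₀ / R) := by linarith
      have h2 : (2 * (ρ₀ / R)) ^ ((d:ℝ)/q - 2) ≤ (1 + ρ₀ / R) ^ ((d:ℝ)/q - 2) :=
        Real.rpow_le_rpow_of_nonpos (by positivity) h1 (by linarith)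
      have h3 : (2 * (ρ₀ / R)) ^ ((d:ℝ)/q - 2) = X / (2:ℝ) ^ ((2:ℝ) - (d:ℝ)/q) := by
        rw [show ((d:ℝ)/q - 2) = -((2:ℝ) - (d:ℝ)/q) by ring,
          Real.rpow_neg (by positivity),
          Real.mul_rpow (by norm_num) (by positivity : (0:ℝ) ≤ ρ₀ / R),
          show (ρ₀ / R) = (R / ρ₀)⁻¹ by rw [inv_div],
          Real.inv_rpow (by positivity), ← hX_def, mul_inv, inv_inv]
        ring
      have h4 : X / 4 ≤ X / (2:ℝ) ^ ((2:ℝ) - (d:ℝ)/q) := by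
        gcongr
      rw [h3] at h2
      rw [hB_def]
      linarith
    by_cases hsub2 : R ≤ r
    · -- small ball subcase
      have hsm := hsmall x₀ R r hR hsub2
      have hRr : 0 < R / r := by positivity
      have hRnn : 0 ≤ R ^ ((2:ℝ) - (d:ℝ)) := Real.rpow_nonneg hR.le _
      have hLHS : R ^ ((2:ℝ) - (d:ℝ)) * (∫ y in ball x₀ R, V y)
          ≤ C₁ * (R/r) ^ ((2:ℝ) - (d:ℝ)/q) := by
        calc R ^ ((2:ℝ) - (d:ℝ)) * (∫ y in ball x₀ R, V y)
            ≤ R ^ ((2:ℝ) - (d:ℝ)) *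
              (C₁ * (R/r) ^ ((d:ℝ) - (d:ℝ)/q) * ∫ y in ball x₀ r, V y) :=
              mul_le_mul_of_nonneg_left hsm hRnn
          _ ≤ R ^ ((2:ℝ) - (d:ℝ)) *
              (C₁ * (R/r) ^ ((d:ℝ) - (d:ℝ)/q) * r ^ ((d:ℝ) - 2)) := by
              have h1 : (0:ℝ) ≤ C₁ * (R/r) ^ ((d:ℝ) - (d:ℝ)/q) := by positivity
              exact mul_le_mul_of_nonneg_left (mul_le_mul_of_nonneg_left hrI h1) hRnn
          _ = C₁ * ((R/r) ^ ((d:ℝ) - (d:ℝ)/q) * (R ^ ((2:ℝ) - (d:ℝ)) * r ^ ((d:ℝ) - 2))) := by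
              ring
          _ = C₁ * ((R/r) ^ ((d:ℝ) - (d:ℝ)/q) * (R/r) ^ ((2:ℝ) - (d:ℝ))) := by
              rw [hfrac hR hr0]
          _ = C₁ * (R/r) ^ (((d:ℝ) - (d:ℝ)/q) + ((2:ℝ) - (d:ℝ))) := by
              rw [← Real.rpow_add hRr]
          _ = C₁ * (R/r) ^ ((2:ℝ) - (d:ℝ)/q) := by
              rw [show ((d:ℝ) - (d:ℝ)/q) + ((2:ℝ) - (d:ℝ)) = (2:ℝ) - (d:ℝ)/q by ring]
      have hfin : C₁ * (R/r) ^ ((2:ℝ) - (d:ℝ)/q) ≤ 4 * C₁ * X := by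
        have h1 : (R/r) ^ ((2:ℝ) - (d:ℝ)/q) ≤ (2 * (R/ρ₀)) ^ ((2:ℝ) - (d:ℝ)/q) :=
          Real.rpow_le_rpow (by positivity) hRr2ρ he2.le
        have h2 : (2 * (R/ρ₀)) ^ ((2:ℝ) - (d:ℝ)/q)
            = (2:ℝ) ^ ((2:ℝ) - (d:ℝ)/q) * X := by
          rw [Real.mul_rpow (by norm_num) (by positivity), ← hX_def]
        calc C₁ * (R/r) ^ ((2:ℝ) - (d:ℝ)/q)
            ≤ C₁ * ((2 * (R/ρ₀)) ^ ((2:ℝ) - (d:ℝ)/q)) :=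
              mul_le_mul_of_nonneg_left h1 hC₁.le
          _ = C₁ * ((2:ℝ) ^ ((2:ℝ) - (d:ℝ)/q) * X) := by rw [h2]
          _ ≤ C₁ * (4 * X) :=
              mul_le_mul_of_nonneg_left (mul_le_mul_of_nonneg_right h24 hX.le) hC₁.le
          _ = 4 * C₁ * X := by ring
      have hgoal : 4 * C₁ * X ≤ (32 * P + 16 * C₁) * A * B := by
        have t1 : (32 * P + 16 * C₁) * ((1/4) * X) ≤ (32 * P + 16 * C₁) * B :=
          mul_le_mul_of_nonneg_left hBlbX hCnn
        have t2 : 0 ≤ ((32 * P + 16 * C₁) * B) * (A - 1) :=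
          mul_nonneg (mul_nonneg hCnn hBnn) (by linarith)
        have t3 : 0 ≤ P * X := mul_nonneg hP.le hX.le
        linarith [t1, t2, t3]
      linarith
    · -- intermediate subcase
      push_neg at hsub2
      have hh1 := hh hsub2.le
      have hRr2' : R / r ≤ 2 := by
        rw [div_le_iff₀ hr0]
        linarith
      have hPN : (R/r) ^ N ≤ P := by
        have h1 := Real.rpow_le_rpow (by positivity : (0:ℝ) ≤ R/r) hRr2' hN.le
        rwa [← hP_def] at h1
      have hXlb : (1/4:ℝ) ≤ X := by
        have h2 : (1/2:ℝ) ≤ R / ρ₀ := by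
          rw [le_div_iff₀ hρ0]
          linarith
        have h3 : ((1:ℝ)/2) ^ ((2:ℝ) - (d:ℝ)/q) ≤ (R/ρ₀) ^ ((2:ℝ) - (d:ℝ)/q) :=
          Real.rpow_le_rpow (by norm_num) h2 he2.le
        have h4 : ((1:ℝ)/2) ^ ((2:ℝ)) ≤ ((1:ℝ)/2) ^ ((2:ℝ) - (d:ℝ)/q) :=
          Real.rpow_le_rpow_of_exponent_ge (by norm_num) (by norm_num) he2'
        have h5 : ((1:ℝ)/2) ^ ((2:ℝ)) = 1/4 := by
          rw [show (2:ℝ) = ((2:ℕ):ℝ) by norm_num, Real.rpow_natCast]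
          norm_num
        rw [hX_def]
        linarith
      have hgoal2 : 2 * P ≤ (32 * P + 16 * C₁) * A * B := by
        have hB16 : (1/16:ℝ) ≤ B := by linarith
        have t1 : (32 * P + 16 * C₁) * (1/16) ≤ (32 * P + 16 * C₁) * B :=
          mul_le_mul_of_nonneg_left hB16 hCnn
        have t2 : 0 ≤ ((32 * P + 16 * C₁) * B) * (A - 1) :=
          mul_nonneg (mul_nonneg hCnn hBnn) (by linarith)
        linarith [t1, t2, hC₁]
      have h2P : 2 * (R/r) ^ N ≤ 2 * P := by linarith
      linarith
end
end

section
/- Let ρ be a critical radius function on ℝ^d, let p ≥ 1, let φ be a Young function which is strictly increasing on [0,∞) with φ(t) → ∞ as t → ∞, and let f be a measurable function on ℝ^d. Then the following are equivalent: (i) there exists θ ≥ 0 such that for every x₀ ∈ ℝ^d, ∫_{ℝ^d} |f|^p M_φ^θ(χ_{B(x₀,ρ(x₀))}) < ∞; (ii) there exists σ > 0 such that ∫_{ℝ^d} |f(x)|^p (1+|x|)^{−σ} dx < ∞. -/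
open MeasureTheory Metric Set
open scoped ENNReal NNReal

noncomputable section

section AuxStmt17

variable {d : ℕ}

lemma lux_eq (φ : ℝ → ℝ) (hφ0 : φ 0 = 0) (x₀ : Euc d) (ρ₀ : ℝ) (c : Euc d) (r lam : ℝ) :
    (∫ t in ball c r, φ (|((ball x₀ ρ₀).indicator (fun _ => (1:ℝ))) t| / lam)) =
      φ (1 / lam) * (volume (ball c r ∩ ball x₀ ρ₀)).toReal := by
  have h : (fun t => φ (|((ball x₀ ρ₀).indicator fun _ => (1:ℝ)) t| / lam))
      = (ball x₀ ρ₀).indicator (fun _ => φ (1/lam)) := by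
    funext t
    by_cases ht : t ∈ ball x₀ ρ₀ <;>
      simp [Set.indicator_of_mem, Set.indicator_of_notMem, ht, hφ0, one_div]
  rw [h, setIntegral_indicator measurableSet_ball, setIntegral_const, smul_eq_mul, mul_comm]; rfl

lemma vol_ratio (hd : 1 ≤ d) (x₀ c : Euc d) {ρ₀ r : ℝ} (h0 : 0 < ρ₀) (h1 : 0 < r) :
    (volume (ball x₀ ρ₀)).toReal / (volume (ball c r)).toReal = (ρ₀/r)^d := by
  have hfr : Module.finrank ℝ (Euc d) = d := by
    rw [finrank_euclideanSpace, Fintype.card_fin]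
  haveI : Nontrivial (Euc d) :=
    Module.nontrivial_of_finrank_pos (R := ℝ) (by omega : 0 < Module.finrank ℝ (Euc d)) 
  rw [Measure.addHaar_ball volume x₀ h0.le, Measure.addHaar_ball volume c h1.le]
  rw [ENNReal.toReal_mul, ENNReal.toReal_mul, ENNReal.toReal_ofReal (by positivity),
    ENNReal.toReal_ofReal (by positivity)]
  have hω : (volume (ball (0:Euc d) 1)).toReal ≠ 0 := by
    refine (ENNReal.toReal_pos (measure_ball_pos volume 0 one_pos).ne' measure_ball_lt_top.ne).ne'
  rw [mul_div_mul_right _ _ hω, div_pow, finrank_euclideanSpace, Fintype.card_fin]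

lemma young_lin_lower {φ : ℝ → ℝ} (hconv : ConvexOn ℝ (Ici 0) φ) (h0 : φ 0 = 0)
    {s : ℝ} (hs : 1 ≤ s) : s * φ 1 ≤ φ s := by
  have hs0 : 0 < s := lt_of_lt_of_le one_pos hs
  have key : φ (s⁻¹ • s + (1 - s⁻¹) • (0:ℝ)) ≤ s⁻¹ • φ s + (1 - s⁻¹) • φ 0 :=
    hconv.2 (mem_Ici.2 hs0.le) (mem_Ici.2 le_rfl) (by positivity)
      (by simp only [sub_nonneg]; exact inv_le_one_of_one_le₀ hs) (by ring)
  simp only [smul_eq_mul, mul_zero, add_zero, h0, mul_zero, inv_mul_cancel₀ hs0.ne'] at key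
  calc s * φ 1 ≤ s * (s⁻¹ * φ s) := by
        exact mul_le_mul_of_nonneg_left key hs0.le
    _ = φ s := by field_simp

lemma young_small {φ : ℝ → ℝ} (hφ : IsYoung φ) :
    0 < (1 + φ 1)⁻¹ ∧ (1 + φ 1)⁻¹ ≤ 1 ∧ φ ((1 + φ 1)⁻¹) ≤ 1 := by
  have h1 : 0 ≤ φ 1 := hφ.nonneg 1 one_pos.le
  have hpos : (0:ℝ) < 1 + φ 1 := by linarith
  have ht0 : 0 < (1 + φ 1)⁻¹ := by positivity
  have ht1 : (1 + φ 1)⁻¹ ≤ 1 := inv_le_one_of_one_le₀ (by linarith)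
  refine ⟨ht0, ht1, ?_⟩
  -- φ t₀ ≤ t₀ * φ 1 by convexity on [0,1]
  have key : φ ((1 - (1 + φ 1)⁻¹) • (0:ℝ) + (1 + φ 1)⁻¹ • (1:ℝ)) ≤
      (1 - (1 + φ 1)⁻¹) • φ 0 + (1 + φ 1)⁻¹ • φ 1 :=
    hφ.convex.2 (mem_Ici.2 (le_refl (0:ℝ))) (mem_Ici.2 one_pos.le)
      (by linarith) ht0.le (by ring)
  simp only [smul_eq_mul, mul_zero, zero_add, mul_one, hφ.zero, mul_zero, zero_add] at key
  calc φ ((1 + φ 1)⁻¹) ≤ (1 + φ 1)⁻¹ * φ 1 := key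
    _ ≤ 1 := by rw [inv_mul_le_iff₀ hpos]; linarith

lemma lux_nonneg (A : ℝ → ℝ) (f : Euc d → ℝ) (c : Euc d) (r : ℝ) :
    0 ≤ luxAvg A f c r :=
  Real.sInf_nonneg (fun _ h => h.1.le)

lemma lux_bddBelow (A : ℝ → ℝ) (f : Euc d → ℝ) (c : Euc d) (r : ℝ) :
    BddBelow {lam : ℝ | 0 < lam ∧
      (∫ t in ball c r, A (|f t| / lam)) ≤ (volume (ball c r)).toReal} :=
  ⟨0, fun _ h => h.1.le⟩

lemma lux_mem {φ : ℝ → ℝ} (hφ : IsYoung φ) (x₀ : Euc d) (ρ₀ : ℝ) (c : Euc d) (r : ℝ) :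
    (1 + φ 1) ∈ {lam : ℝ | 0 < lam ∧
      (∫ t in ball c r, φ (|((ball x₀ ρ₀).indicator (fun _ => (1:ℝ))) t| / lam)) ≤
        (volume (ball c r)).toReal} := by
  obtain ⟨ht0, ht1, hφt⟩ := young_small hφ
  have hpos : (0:ℝ) < 1 + φ 1 := by
    have := hφ.nonneg 1 one_pos.le; linarith
  refine ⟨hpos, ?_⟩
  rw [lux_eq φ hφ.zero, one_div]
  calc φ ((1 + φ 1)⁻¹) * (volume (ball c r ∩ ball x₀ ρ₀)).toReal
      ≤ 1 * (volume (ball c r)).toReal := by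
        apply mul_le_mul hφt ?_ ENNReal.toReal_nonneg one_pos.le
        exact ENNReal.toReal_mono measure_ball_lt_top.ne (measure_mono inter_subset_left)
    _ = (volume (ball c r)).toReal := one_mul _

lemma lux_le {φ : ℝ → ℝ} (hφ : IsYoung φ) (x₀ : Euc d) (ρ₀ : ℝ) (c : Euc d) (r : ℝ) :
    luxAvg φ ((ball x₀ ρ₀).indicator (fun _ => (1:ℝ))) c r ≤ 1 + φ 1 :=
  csInf_le (lux_bddBelow _ _ _ _) (lux_mem hφ x₀ ρ₀ c r)

lemma lux_zero {φ : ℝ → ℝ} (hφ : IsYoung φ) (x₀ : Euc d) (ρ₀ : ℝ) (c : Euc d) (r : ℝ)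
    (hdisj : ball c r ∩ ball x₀ ρ₀ = ∅) :
    luxAvg φ ((ball x₀ ρ₀).indicator (fun _ => (1:ℝ))) c r = 0 := by
  unfold luxAvg
  have : {lam : ℝ | 0 < lam ∧
      (∫ t in ball c r, φ (|((ball x₀ ρ₀).indicator (fun _ => (1:ℝ))) t| / lam)) ≤
        (volume (ball c r)).toReal} = Ioi 0 := by
    ext lam
    simp only [mem_setOf_eq, mem_Ioi, and_iff_left_iff_imp]
    intro _
    rw [lux_eq φ hφ.zero, hdisj]
    simp [ENNReal.toReal_nonneg]
  rw [this, csInf_Ioi]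

lemma lux_ge {φ : ℝ → ℝ} (hφ : IsYoung φ) (x₀ : Euc d) {ρ₀ : ℝ} (hρ₀ : 0 < ρ₀)
    (c : Euc d) {r : ℝ} (hr : 0 < r)
    (hsub : ball x₀ ρ₀ ⊆ ball c r) :
    min 1 (φ 1 * ((volume (ball x₀ ρ₀)).toReal / (volume (ball c r)).toReal)) ≤
      luxAvg φ ((ball x₀ ρ₀).indicator (fun _ => (1:ℝ))) c r := by
  set V₀ := (volume (ball x₀ ρ₀)).toReal with hV₀
  set V := (volume (ball c r)).toReal with hV
  have hVpos : 0 < V :=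
    ENNReal.toReal_pos (measure_ball_pos volume c hr).ne' measure_ball_lt_top.ne
  have hV₀nn : 0 ≤ V₀ := ENNReal.toReal_nonneg
  refine le_csInf ⟨_, lux_mem hφ x₀ ρ₀ c r⟩ ?_
  rintro lam ⟨hlam, hle⟩
  rw [lux_eq φ hφ.zero, inter_eq_self_of_subset_right hsub] at hle
  rcases le_total 1 lam with h1 | h1
  · exact le_trans (min_le_left _ _) h1
  · refine le_trans (min_le_right _ _) ?_
    have hs : 1 ≤ 1 / lam := by
      rw [le_div_iff₀ hlam]; linarith
    have hlin : (1 / lam) * φ 1 ≤ φ (1 / lam) := young_lin_lower hφ.convex hφ.zero hs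
    have : (1 / lam) * φ 1 * V₀ ≤ V :=
      le_trans (mul_le_mul_of_nonneg_right hlin hV₀nn) hle
    rw [← mul_div_assoc, div_le_iff₀ hVpos]
    calc φ 1 * V₀ = lam * ((1/lam) * φ 1 * V₀) := by field_simp
      _ ≤ lam * V := mul_le_mul_of_nonneg_left this hlam.le

lemma inv_le_mul_inv' {a b K : ℝ} (ha : 0 < a) (hb : 0 < b) (h : b ≤ K * a) : a⁻¹ ≤ K * b⁻¹ := by
  rw [inv_eq_one_div, mul_comm, inv_mul_eq_div, div_le_div_iff₀ ha hb]
  linarith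

lemma rpow_neg_le' {a b t : ℝ} (ha : 0 < a) (hab : a ≤ b) (ht : 0 ≤ t) :
    b ^ (-t) ≤ a ^ (-t) := by
  rw [Real.rpow_neg (ha.le.trans hab), Real.rpow_neg ha.le]
  exact inv_anti₀ (Real.rpow_pos_of_pos ha t) (Real.rpow_le_rpow ha.le hab ht)

lemma min_mul_le' {a u : ℝ} (ha : 0 ≤ a) (hu0 : 0 ≤ u) (hu1 : u ≤ 1) :
    min 1 a * u ≤ min 1 (a * u) := by
  rcases le_total (a * u) 1 with h | h
  · rw [min_eq_right h]
    exact mul_le_mul_of_nonneg_right (min_le_right 1 a) hu0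
  · rw [min_eq_left h]
    exact mul_le_one₀ (min_le_left 1 a) hu0 hu1

end AuxStmt17

set_option maxHeartbeats 1000000 in
/-- Proposition 5.2: for `p ≥ 1` and a Young function `φ` strictly
increasing to infinity, a measurable `f` satisfies
`∫ |f|^p M_φ^θ(χ_{B(x₀,ρ(x₀))}) < ∞` for some `θ ≥ 0` and every `x₀`, if and only if
`∫ |f|^p (1+|x|)^{-σ} dx < ∞` for some `σ > 0`. -/
theorem stmt17 {d : ℕ} (hd : 1 ≤ d) (ρ : Euc d → ℝ) (C₀ N₀ : ℝ)
    (hρ : IsCriticalRadius ρ C₀ N₀) (p : ℝ) (hp : 1 ≤ p)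
    (φ : ℝ → ℝ) (hφ : IsYoung φ) (hφmono : StrictMonoOn φ (Ici 0))
    (hφtop : Filter.Tendsto φ Filter.atTop Filter.atTop)
    (f : Euc d → ℝ) (hf : Measurable f) :
    (∃ θ : ℝ, 0 ≤ θ ∧ ∀ x₀ : Euc d,
      (∫⁻ x, ENNReal.ofReal (|f x| ^ p) *
        orliczMaxTheta ρ θ φ ((ball x₀ (ρ x₀)).indicator fun _ => (1:ℝ)) x) < ⊤) ↔
    (∃ σ > (0:ℝ),
      (∫⁻ x : Euc d, ENNReal.ofReal (|f x| ^ p * (1 + ‖x‖) ^ (-σ))) < ⊤) := by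
  have hd1 : (1:ℝ) ≤ (d:ℝ) := by exact_mod_cast hd
  obtain ⟨hC₀, hN₀, hρpos, hρest⟩ := hρ
  have hφ1 : 0 < φ 1 := by
    have := hφmono (mem_Ici.2 le_rfl) (mem_Ici.2 one_pos.le) one_pos
    rwa [hφ.zero] at this
  constructor
  · -- (i) → (ii)
    rintro ⟨θ, hθ, hall⟩
    set ρ₀ := ρ (0 : Euc d) with hρ₀def
    clear_value ρ₀
    have hρ₀ : 0 < ρ₀ := by rw [hρ₀def]; exact hρpos 0
    have hσpos : 0 < θ + (d:ℝ) := by linarith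
    refine ⟨θ + (d:ℝ), hσpos, ?_⟩
    set m := min 1 (φ 1) with hm
    clear_value m
    have hmpos : 0 < m := by rw [hm]; exact lt_min one_pos hφ1
    set A := 1 + (1+ρ₀)/ρ₀ with hA
    clear_value A
    have hA1 : 1 ≤ A := by
      have : 0 < (1+ρ₀)/ρ₀ := by positivity
      linarith
    have hApos : 0 < A := lt_of_lt_of_le one_pos hA1
    set c₂ := A^(-θ) * m * (ρ₀/(1+ρ₀))^d with hc₂def
    clear_value c₂
    have hc₂ : 0 < c₂ := by
      have h1 : 0 < A^(-θ) := Real.rpow_pos_of_pos hApos _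
      have h2 : 0 < (ρ₀/(1+ρ₀))^d := pow_pos (div_pos hρ₀ (by linarith)) _
      rw [hc₂def]; exact mul_pos (mul_pos h1 hmpos) h2
    have key : ∀ x : Euc d, ENNReal.ofReal (c₂ * (1+‖x‖)^(-(θ + (d:ℝ)))) ≤
        orliczMaxTheta ρ θ φ ((ball (0:Euc d) ρ₀).indicator fun _ => (1:ℝ)) x := by
      intro x
      set X := 1 + ‖x‖ with hXdef
      clear_value X
      have hX : 1 ≤ X := by
        have := norm_nonneg x; simp only [hXdef]; linarith
      have hXpos : 0 < X := lt_of_lt_of_le one_pos hX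
      set r := 1 + ρ₀ + ‖x‖ with hrdef
      clear_value r
      have hr : 0 < r := by have := norm_nonneg x; simp only [hrdef]; linarith
      have hxr : x ∈ ball (0:Euc d) r := by
        rw [mem_ball, dist_zero_right]; simp only [hrdef]; linarith
      have hsub : ball (0:Euc d) ρ₀ ⊆ ball (0:Euc d) r :=
        ball_subset_ball (by have := norm_nonneg x; simp only [hrdef]; linarith)
      have hlux := lux_ge hφ (0:Euc d) hρ₀ (0:Euc d) hr hsub
      rw [vol_ratio hd _ _ hρ₀ hr] at hlux
      have hrle : r ≤ (1+ρ₀)*X := by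
        simp only [hrdef, hXdef]; nlinarith [norm_nonneg x]
      have hwb : (A*X)^(-θ) ≤ (1 + r/ρ₀)^(-θ) := by
        apply rpow_neg_le' (by positivity) ?_ hθ
        have h2 : r/ρ₀ ≤ ((1+ρ₀)*X)/ρ₀ := by gcongr
        have h3 : A*X = X + ((1+ρ₀)*X)/ρ₀ := by rw [hA]; ring
        rw [h3]; linarith
      have hu' : (ρ₀/((1+ρ₀)*X))^d ≤ (ρ₀/r)^d := by
        gcongr
      have hu1 : (ρ₀/r)^d ≤ 1 := by
        apply pow_le_one₀ (by positivity)
        rw [div_le_one hr]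
        have := norm_nonneg x; simp only [hrdef]; linarith
      have hlux2 : m * (ρ₀/((1+ρ₀)*X))^d ≤
          luxAvg φ ((ball (0:Euc d) ρ₀).indicator fun _ => (1:ℝ)) 0 r := by
        calc m * (ρ₀/((1+ρ₀)*X))^d ≤ m * (ρ₀/r)^d := by
              exact mul_le_mul_of_nonneg_left hu' hmpos.le
          _ ≤ min 1 (φ 1 * (ρ₀/r)^d) := by
              rw [hm]
              exact min_mul_le' (hφ.nonneg 1 one_pos.le) (by positivity) hu1
          _ ≤ _ := hlux
      have hsplit1 : (A*X)^(-θ) = A^(-θ) * X^(-θ) := Real.mul_rpow hApos.le hXpos.le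
      have hsplit2 : (ρ₀/((1+ρ₀)*X))^d = (ρ₀/(1+ρ₀))^d * (X^(-(d:ℝ))) := by
        have h1 : ρ₀/((1+ρ₀)*X) = (ρ₀/(1+ρ₀)) * X⁻¹ := by
          field_simp
        rw [h1, mul_pow, inv_pow, ← Real.rpow_natCast X d, ← Real.rpow_neg hXpos.le]
      have hXadd : X^(-θ) * X^(-(d:ℝ)) = X^(-(θ+(d:ℝ))) := by
        rw [← Real.rpow_add hXpos]; ring_nf
      have hreal : c₂ * X^(-(θ+(d:ℝ))) ≤
          (1 + r/ρ₀)^(-θ) *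
            luxAvg φ ((ball (0:Euc d) ρ₀).indicator fun _ => (1:ℝ)) 0 r := by
        have e1 : c₂ * X^(-(θ+(d:ℝ))) =
            (A^(-θ) * X^(-θ)) * (m * ((ρ₀/(1+ρ₀))^d * X^(-(d:ℝ)))) := by
          rw [← hXadd, hc₂def]; ring
        rw [e1, ← hsplit1, ← hsplit2]
        exact mul_le_mul hwb hlux2 (by positivity) (Real.rpow_nonneg (by positivity) _)
      refine le_trans (ENNReal.ofReal_le_ofReal hreal) ?_
      unfold orliczMaxTheta
      rw [hρ₀def]
      exact le_iSup_of_le (0:Euc d) (le_iSup_of_le r (le_iSup_of_le hxr le_rfl))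
    have hfin := hall 0
    rw [show ρ (0:Euc d) = ρ₀ from hρ₀def.symm] at hfin
    have hcne : ENNReal.ofReal c₂ ≠ 0 := (ENNReal.ofReal_pos.mpr hc₂).ne'
    calc ∫⁻ x, ENNReal.ofReal (|f x|^p * (1+‖x‖)^(-(θ+(d:ℝ))))
        ≤ ∫⁻ x, (ENNReal.ofReal c₂)⁻¹ * (ENNReal.ofReal (|f x|^p) *
            orliczMaxTheta ρ θ φ ((ball (0:Euc d) ρ₀).indicator fun _ => (1:ℝ)) x) := by
          apply lintegral_mono; intro x
          dsimp only
          rw [ENNReal.ofReal_mul (by positivity)]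
          have h1 : ENNReal.ofReal ((1+‖x‖)^(-(θ+(d:ℝ)))) ≤ (ENNReal.ofReal c₂)⁻¹ *
              orliczMaxTheta ρ θ φ ((ball (0:Euc d) ρ₀).indicator fun _ => (1:ℝ)) x := by
            rw [← one_mul (ENNReal.ofReal ((1+‖x‖)^(-(θ+(d:ℝ))))),
              ← ENNReal.inv_mul_cancel hcne ENNReal.ofReal_ne_top, mul_assoc]
            refine mul_le_mul_right ?_ _
            rw [← ENNReal.ofReal_mul hc₂.le]
            exact key x
          calc ENNReal.ofReal (|f x|^p) * ENNReal.ofReal ((1+‖x‖)^(-(θ+(d:ℝ))))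
              ≤ ENNReal.ofReal (|f x|^p) * ((ENNReal.ofReal c₂)⁻¹ *
                orliczMaxTheta ρ θ φ ((ball (0:Euc d) ρ₀).indicator fun _ => (1:ℝ)) x) :=
                mul_le_mul_right h1 _
            _ = (ENNReal.ofReal c₂)⁻¹ * (ENNReal.ofReal (|f x|^p) *
                orliczMaxTheta ρ θ φ ((ball (0:Euc d) ρ₀).indicator fun _ => (1:ℝ)) x) := by
                ring
      _ = (ENNReal.ofReal c₂)⁻¹ * ∫⁻ x, ENNReal.ofReal (|f x|^p) *
            orliczMaxTheta ρ θ φ ((ball (0:Euc d) ρ₀).indicator fun _ => (1:ℝ)) x :=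
          lintegral_const_mul' _ _ (ENNReal.inv_ne_top.2 hcne)
      _ < ⊤ := ENNReal.mul_lt_top (ENNReal.inv_lt_top.2 (ENNReal.ofReal_pos.mpr hc₂)) hfin
  · -- (ii) → (i)
    rintro ⟨σ, hσ, hfin⟩
    have hN₁ : (0:ℝ) < N₀ + 1 := by linarith
    set θ := σ * (N₀ + 1) with hθdef
    clear_value θ
    have hθ : 0 ≤ θ := by rw [hθdef]; positivity
    refine ⟨θ, hθ, fun x₀ => ?_⟩
    set ρ₀ := ρ x₀ with hρ₀def
    clear_value ρ₀
    have hρ₀ : 0 < ρ₀ := by rw [hρ₀def]; exact hρpos x₀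
    set β := N₀ / (N₀ + 1) with hβdef
    clear_value β
    have hβnn : 0 ≤ β := by rw [hβdef]; positivity
    have hβ1 : β ≤ 1 := by rw [hβdef, div_le_one hN₁]; linarith
    set γ := (N₀ + 1)⁻¹ with hγdef
    clear_value γ
    have hγpos : 0 < γ := by rw [hγdef]; positivity
    have hβγ : β + γ = 1 := by rw [hβdef, hγdef]; field_simp
    have hγθ : γ * θ = σ := by rw [hγdef, hθdef]; field_simp
    set R₀ := max 1 ρ₀ with hR₀def
    clear_value R₀
    have hR₀1 : (1:ℝ) ≤ R₀ := by rw [hR₀def]; exact le_max_left _ _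
    set c₁ := 1 + φ 1 with hc₁def
    clear_value c₁
    have hc₁ : 0 < c₁ := by have := hφ.nonneg 1 one_pos.le; simp only [hc₁def]; linarith
    set Kc := (3*C₀)^θ * (2*ρ₀)^σ with hKcdef
    clear_value Kc
    have hKc : 0 < Kc := by
      have h1 : 0 < (3*C₀)^θ := Real.rpow_pos_of_pos (by linarith) _
      have h2 : 0 < (2*ρ₀)^σ := Real.rpow_pos_of_pos (by linarith) _
      rw [hKcdef]; exact mul_pos h1 h2
    set B' := 2*(1+‖x₀‖+ρ₀) with hB'def
    clear_value B'
    have hB' : 1 ≤ B' := by have := norm_nonneg x₀; simp only [hB'def]; linarith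
    set CC := c₁ * max Kc ((1+R₀)^σ) * B'^σ with hCCdef
    clear_value CC
    have hmaxpos : 0 < max Kc ((1+R₀)^σ) := lt_max_of_lt_left hKc
    have hCC : 0 < CC := by
      have h3 : 0 < B'^σ := Real.rpow_pos_of_pos (by linarith) _
      rw [hCCdef]; exact mul_pos (mul_pos hc₁ hmaxpos) h3
    have key : ∀ x : Euc d,
        orliczMaxTheta ρ θ φ ((ball x₀ ρ₀).indicator fun _ => (1:ℝ)) x ≤
          ENNReal.ofReal (CC * (1+‖x‖)^(-σ)) := by
      intro x
      unfold orliczMaxTheta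
      refine iSup_le fun c => iSup_le fun r => iSup_le fun hx => ?_
      apply ENNReal.ofReal_le_ofReal
      have hρc : 0 < ρ c := hρpos c
      have hr : 0 < r := lt_of_le_of_lt dist_nonneg (mem_ball.mp hx)
      have hXpos : (0:ℝ) < 1 + ‖x‖ := by have := norm_nonneg x; linarith
      by_cases hint : ball c r ∩ ball x₀ ρ₀ = ∅
      · rw [lux_zero hφ _ _ _ _ hint, mul_zero]
        exact mul_nonneg hCC.le (Real.rpow_nonneg hXpos.le _)
      · obtain ⟨z, hz1, hz2⟩ := Set.nonempty_iff_ne_empty.mpr hint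
        have hz1' := mem_ball.mp hz1
        have hz2' := mem_ball.mp hz2
        have hdistc : dist x₀ c < r + ρ₀ := by
          have h := dist_triangle x₀ z c
          rw [dist_comm x₀ z] at h
          linarith
        have hx_est : 1 + ‖x‖ ≤ B' * (1+r) := by
          have h1 : dist x x₀ ≤ dist x c + dist c x₀ := dist_triangle _ _ _
          have h2 : dist x c < r := mem_ball.mp hx
          have h3 : dist c x₀ = dist x₀ c := dist_comm _ _
          have h4 : ‖x‖ - ‖x₀‖ ≤ ‖x - x₀‖ := norm_sub_norm_le _ _
          have h5 : dist x x₀ = ‖x - x₀‖ := dist_eq_norm _ _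
          have hW : (1:ℝ) ≤ 1+‖x₀‖+ρ₀ := by have := norm_nonneg x₀; linarith
          simp only [hB'def]
          nlinarith [norm_nonneg x₀, hr.le, mul_le_mul_of_nonneg_right hW hr.le]
        have hlux : luxAvg φ ((ball x₀ ρ₀).indicator fun _ => (1:ℝ)) c r ≤ c₁ := by
          rw [hc₁def]; exact lux_le hφ x₀ ρ₀ c r
        have hluxnn : 0 ≤ luxAvg φ ((ball x₀ ρ₀).indicator fun _ => (1:ℝ)) c r :=
          lux_nonneg _ _ _ _
        have hwnn : 0 ≤ (1 + r/ρ c)^(-θ) := Real.rpow_nonneg (by positivity) _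
        have hbase : (1:ℝ) ≤ 1 + r/ρ c := by
          have : 0 ≤ r/ρ c := by positivity
          linarith
        -- main bound on weight * lux in terms of (1+r)^{-σ}
        have hstep : (1 + r/ρ c)^(-θ) *
            luxAvg φ ((ball x₀ ρ₀).indicator fun _ => (1:ℝ)) c r ≤
            (c₁ * max Kc ((1+R₀)^σ)) * (1+r)^(-σ) := by
          rcases le_total r R₀ with hcase | hcase
          · -- small radius
            have hw1 : (1 + r/ρ c)^(-θ) ≤ 1 :=
              Real.rpow_le_one_of_one_le_of_nonpos hbase (neg_nonpos.2 hθ)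
            have hmono : (1+R₀)^(-σ) ≤ (1+r)^(-σ) :=
              rpow_neg_le' (by linarith) (by linarith) hσ.le
            have hid : (1+R₀)^σ * (1+R₀)^(-σ) = 1 := by
              rw [← Real.rpow_add (by linarith : (0:ℝ) < 1+R₀)]
              simp
            calc (1 + r/ρ c)^(-θ) *
                luxAvg φ ((ball x₀ ρ₀).indicator fun _ => (1:ℝ)) c r
                ≤ 1 * c₁ := mul_le_mul hw1 hlux hluxnn one_pos.le
              _ = c₁ * ((1+R₀)^σ * (1+R₀)^(-σ)) := by rw [hid]; ring
              _ ≤ c₁ * ((1+R₀)^σ * (1+r)^(-σ)) := by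
                  refine mul_le_mul_of_nonneg_left ?_ hc₁.le
                  exact mul_le_mul_of_nonneg_left hmono (Real.rpow_nonneg (by linarith) _)
              _ = (c₁ * (1+R₀)^σ) * (1+r)^(-σ) := by ring
              _ ≤ (c₁ * max Kc ((1+R₀)^σ)) * (1+r)^(-σ) := by
                  have h1 : (1+R₀)^σ ≤ max Kc ((1+R₀)^σ) := le_max_right _ _
                  have hrp : 0 ≤ (1+r)^(-σ) := Real.rpow_nonneg (by linarith) _
                  exact mul_le_mul_of_nonneg_right
                    (mul_le_mul_of_nonneg_left h1 hc₁.le) hrp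
          · -- large radius
            have hr1 : (1:ℝ) ≤ r := le_trans hR₀1 hcase
            have hrρ : ρ₀ ≤ r := by
              refine le_trans ?_ hcase
              rw [hR₀def]; exact le_max_right _ _
            set u := r / ρ₀ with hudef
            clear_value u
            have hu1 : (1:ℝ) ≤ u := by rw [hudef]; exact (one_le_div hρ₀).2 hrρ
            have hu0 : (0:ℝ) < u := lt_of_lt_of_le one_pos hu1
            -- upper bound for ρ c
            have hρc_up : ρ c ≤ 3*C₀*ρ₀*u^β := by
              have hb := (hρest x₀ c).2
              rw [← hρ₀def] at hb
              have h2 : dist x₀ c / ρ₀ ≤ (r+ρ₀)/ρ₀ := by gcongr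
              have h4 : (r+ρ₀)/ρ₀ = u + 1 := by rw [hudef]; field_simp
              have h5 : 1 + dist x₀ c/ρ₀ ≤ 3*u := by
                rw [h4] at h2; linarith
              have h6 : (1 + dist x₀ c/ρ₀)^β ≤ (3*u)^β :=
                Real.rpow_le_rpow (by positivity) h5 hβnn
              have h7 : (3*u)^β ≤ 3*u^β := by
                rw [Real.mul_rpow (by norm_num) hu0.le]
                have h8 : (3:ℝ)^β ≤ 3 := by
                  calc (3:ℝ)^β ≤ (3:ℝ)^(1:ℝ) :=
                        Real.rpow_le_rpow_of_exponent_le (by norm_num) hβ1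
                    _ = 3 := Real.rpow_one 3
                exact mul_le_mul_of_nonneg_right h8 (Real.rpow_nonneg hu0.le _)
              calc ρ c ≤ C₀ * ρ₀ * (1 + dist x₀ c/ρ₀)^β := hb
                _ ≤ C₀ * ρ₀ * (3*u^β) := by
                    exact mul_le_mul_of_nonneg_left (le_trans h6 h7)
                      (mul_nonneg hC₀.le hρ₀.le)
                _ = 3*C₀*ρ₀*u^β := by ring
            have hubpos : 0 < u^β := Real.rpow_pos_of_pos hu0 _
            have hsplitu : u = u^β * u^γ := by
              rw [← Real.rpow_add hu0, hβγ, Real.rpow_one]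
            -- lower bound for r / ρ c
            have hden : 0 < 3*C₀*ρ₀*u^β := by positivity
            have hrc0 : r/(3*C₀*ρ₀*u^β) ≤ r/ρ c := by gcongr
            have hreq : r = ρ₀ * u := by rw [hudef]; field_simp
            have hrc1 : r/(3*C₀*ρ₀*u^β) = u^γ/(3*C₀) := by
              rw [hreq, div_eq_div_iff hden.ne' (show (3*C₀) ≠ 0 by positivity)]
              calc ρ₀ * u * (3*C₀) = (u^β*u^γ) * (ρ₀*(3*C₀)) := by rw [← hsplitu]; ring
                _ = u^γ * (3*C₀*ρ₀*u^β) := by ring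
            have hrc : u^γ/(3*C₀) ≤ r/ρ c := hrc1 ▸ hrc0
            have hq : u^γ/(3*C₀) ≤ 1 + r/ρ c := by
              have : 0 ≤ (1:ℝ) := zero_le_one
              have h9 : r/ρ c ≤ 1 + r/ρ c := by linarith
              linarith [hrc]
            have hqpos : 0 < u^γ/(3*C₀) := by
              have := Real.rpow_pos_of_pos hu0 γ; positivity
            have hpow : (u^γ/(3*C₀))^θ ≤ (1 + r/ρ c)^θ :=
              Real.rpow_le_rpow hqpos.le hq hθ
            have hval : (u^γ/(3*C₀))^θ = u^(γ*θ)/(3*C₀)^θ := by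
              rw [Real.div_rpow (Real.rpow_nonneg hu0.le _) (by linarith : (0:ℝ) ≤ 3*C₀),
                ← Real.rpow_mul hu0.le]
            have h3C : 0 < (3*C₀)^θ := Real.rpow_pos_of_pos (by linarith) _
            have h2ρ : 0 < (2*ρ₀)^σ := Real.rpow_pos_of_pos (by linarith) _
            have huσ : (1+r)^σ / (2*ρ₀)^σ ≤ u^σ := by
              have h1 : (1+r)/(2*ρ₀) ≤ u := by
                rw [hudef]
                calc (1+r)/(2*ρ₀) ≤ (2*r)/(2*ρ₀) := by gcongr; linarith
                  _ = r/ρ₀ := mul_div_mul_left r ρ₀ two_ne_zero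
              calc (1+r)^σ/(2*ρ₀)^σ = ((1+r)/(2*ρ₀))^σ :=
                    (Real.div_rpow (show (0:ℝ) ≤ 1+r by linarith)
                      (show (0:ℝ) ≤ 2*ρ₀ by linarith) σ).symm
                _ ≤ u^σ := Real.rpow_le_rpow (by positivity) h1 hσ.le
            have hA1' : (1+r)^σ/Kc ≤ u^σ/(3*C₀)^θ := by
              rw [hKcdef, div_le_div_iff₀ (by positivity) h3C]
              calc (1+r)^σ * (3*C₀)^θ
                  = ((1+r)^σ/(2*ρ₀)^σ) * ((3*C₀)^θ*(2*ρ₀)^σ) := by field_simp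
                _ ≤ u^σ * ((3*C₀)^θ*(2*ρ₀)^σ) :=
                    mul_le_mul_of_nonneg_right huσ (by positivity)
            have hchain : (1+r)^σ/Kc ≤ (1+r/ρ c)^θ := by
              refine le_trans hA1' ?_
              calc u^σ/(3*C₀)^θ = (u^γ/(3*C₀))^θ := by rw [hval, hγθ]
                _ ≤ _ := hpow
            have hwb : (1 + r/ρ c)^(-θ) ≤ Kc * (1+r)^(-σ) := by
              rw [Real.rpow_neg (by positivity : (0:ℝ) ≤ 1 + r/ρ c),
                Real.rpow_neg (by linarith : (0:ℝ) ≤ 1+r)]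
              apply inv_le_mul_inv' (Real.rpow_pos_of_pos (by positivity) _)
                (Real.rpow_pos_of_pos (by linarith) _)
              calc (1+r)^σ = Kc * ((1+r)^σ/Kc) := by field_simp
                _ ≤ Kc * (1+r/ρ c)^θ := mul_le_mul_of_nonneg_left hchain hKc.le
            calc (1 + r/ρ c)^(-θ) *
                luxAvg φ ((ball x₀ ρ₀).indicator fun _ => (1:ℝ)) c r
                ≤ (Kc*(1+r)^(-σ)) * c₁ := by
                  refine mul_le_mul hwb hlux hluxnn ?_
                  have : 0 ≤ (1+r)^(-σ) := Real.rpow_nonneg (by linarith) _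
                  positivity
              _ = (c₁*Kc) * (1+r)^(-σ) := by ring
              _ ≤ (c₁ * max Kc ((1+R₀)^σ)) * (1+r)^(-σ) := by
                  have h1 : Kc ≤ max Kc ((1+R₀)^σ) := le_max_left _ _
                  have hrp : 0 ≤ (1+r)^(-σ) := Real.rpow_nonneg (by linarith) _
                  have h2 : c₁*Kc ≤ c₁ * max Kc ((1+R₀)^σ) :=
                    mul_le_mul_of_nonneg_left h1 hc₁.le
                  exact mul_le_mul_of_nonneg_right h2 hrp
        -- combine with x-r comparison
        have hfin2 : (1+r)^(-σ) ≤ B'^σ * (1+‖x‖)^(-σ) := by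
          rw [Real.rpow_neg (by linarith : (0:ℝ) ≤ 1+r), Real.rpow_neg hXpos.le]
          apply inv_le_mul_inv' (Real.rpow_pos_of_pos (by linarith) _)
            (Real.rpow_pos_of_pos hXpos _)
          calc (1+‖x‖)^σ ≤ (B'*(1+r))^σ := Real.rpow_le_rpow hXpos.le hx_est hσ.le
            _ = B'^σ * (1+r)^σ := Real.mul_rpow (by linarith) (by linarith)
        calc (1 + r/ρ c)^(-θ) *
            luxAvg φ ((ball x₀ ρ₀).indicator fun _ => (1:ℝ)) c r
            ≤ (c₁ * max Kc ((1+R₀)^σ)) * (1+r)^(-σ) := hstep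
          _ ≤ (c₁ * max Kc ((1+R₀)^σ)) * (B'^σ * (1+‖x‖)^(-σ)) :=
              mul_le_mul_of_nonneg_left hfin2 (by positivity)
          _ = CC * (1+‖x‖)^(-σ) := by rw [hCCdef]; ring
    -- integrate
    have hCne : ENNReal.ofReal CC ≠ ⊤ := ENNReal.ofReal_ne_top
    calc ∫⁻ x, ENNReal.ofReal (|f x|^p) *
          orliczMaxTheta ρ θ φ ((ball x₀ ρ₀).indicator fun _ => (1:ℝ)) x
        ≤ ∫⁻ x, ENNReal.ofReal CC * ENNReal.ofReal (|f x|^p * (1+‖x‖)^(-σ)) := by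
          apply lintegral_mono; intro x
          dsimp only
          calc ENNReal.ofReal (|f x|^p) *
              orliczMaxTheta ρ θ φ ((ball x₀ ρ₀).indicator fun _ => (1:ℝ)) x
              ≤ ENNReal.ofReal (|f x|^p) * ENNReal.ofReal (CC * (1+‖x‖)^(-σ)) :=
                mul_le_mul_right (key x) _
            _ = ENNReal.ofReal CC * ENNReal.ofReal (|f x|^p * (1+‖x‖)^(-σ)) := by
                rw [← ENNReal.ofReal_mul (by positivity : (0:ℝ) ≤ |f x|^p),
                  ← ENNReal.ofReal_mul hCC.le]
                congr 1
                ring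
      _ = ENNReal.ofReal CC * ∫⁻ x, ENNReal.ofReal (|f x|^p * (1+‖x‖)^(-σ)) :=
          lintegral_const_mul' _ _ hCne
      _ < ⊤ := ENNReal.mul_lt_top ENNReal.ofReal_lt_top hfin
end
end

section
/- Let ρ be a critical radius function on ℝ^d, let 1 ≤ p < ∞, let φ be a Young function, and let T be a map from a set S of measurable functions on ℝ^d to measurable functions on ℝ^d such that: for every θ ≥ 0 there exists a constant C with ∫ |Tf|^p w ≤ C ∫ |f|^p M_φ^θ w for every weight w and every f ∈ S. Then for every f ∈ S satisfying ∫_{ℝ^d} |f(x)|^p (1+|x|)^{−σ} dx < ∞ for some σ > 0, one has Tf ∈ L^p_{loc}(ℝ^d), i.e. ∫_B |Tf|^p < ∞ for every ball B; in particular Tf is finite almost everywhere. -/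
open MeasureTheory Metric Set
open scoped ENNReal NNReal

noncomputable section

set_option maxHeartbeats 2000000

/-- Auxiliary: the Luxemburg average is nonnegative. -/
lemma stmt18_luxAvg_nonneg {d : ℕ} (A : ℝ → ℝ) (f : Euc d → ℝ) (c : Euc d) (r : ℝ) :
    0 ≤ luxAvg A f c r :=
  Real.sInf_nonneg fun _ hx => hx.1.le

/-- Theorem 5.3: if `T` satisfies, for every `θ ≥ 0`,
`∫ |Tf|^p w ≤ C ∫ |f|^p M_φ^θ w` for all weights `w` and all `f ∈ S`, then for every `f ∈ S`
with `∫ |f|^p (1+|x|)^{-σ} < ∞` for some `σ > 0`, `Tf ∈ L^p_loc`. -/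
theorem stmt18 {d : ℕ} (hd : 1 ≤ d) (ρ : Euc d → ℝ) (C₀ N₀ : ℝ)
    (hρ : IsCriticalRadius ρ C₀ N₀) (p : ℝ) (hp : 1 ≤ p)
    (φ : ℝ → ℝ) (hφ : IsYoung φ)
    (S : Set (Euc d → ℝ)) (T : (Euc d → ℝ) → Euc d → ℝ)
    (hT : ∀ θ : ℝ, 0 ≤ θ → ∃ C > (0:ℝ), ∀ w : Euc d → ℝ, IsWeight w → ∀ f ∈ S,
      ∫⁻ x, ENNReal.ofReal (|T f x| ^ p * w x) ≤
        ENNReal.ofReal C *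
          ∫⁻ x, ENNReal.ofReal (|f x| ^ p) * orliczMaxTheta ρ θ φ w x) :
    ∀ f ∈ S,
      (∃ σ > (0:ℝ),
        (∫⁻ x : Euc d, ENNReal.ofReal (|f x| ^ p * (1 + ‖x‖) ^ (-σ))) < ⊤) →
      ∀ (x₀ : Euc d) (r : ℝ),
        (∫⁻ x in ball x₀ r, ENNReal.ofReal (|T f x| ^ p)) < ⊤ := by
  obtain ⟨hC₀, hN₀, hρpos, hρineq⟩ := hρ
  rintro f hfS ⟨σ, hσ, hfin⟩ x₀ r
  set R : ℝ := max r 1 with hRdef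
  have hR1 : (1:ℝ) ≤ R := le_max_right _ _
  have hR0 : (0:ℝ) < R := lt_of_lt_of_le one_pos hR1
  set w : Euc d → ℝ := (ball x₀ R).indicator (fun _ => 1) with hwdef
  have hw01 : ∀ t, 0 ≤ w t ∧ w t ≤ 1 := by
    intro t
    by_cases ht : t ∈ ball x₀ R <;> simp [hwdef, ht]
  have hw : IsWeight w := by
    refine ⟨fun t => (hw01 t).1, Integrable.locallyIntegrable ?_⟩
    rw [hwdef, integrable_indicator_iff measurableSet_ball]
    exact integrableOn_const measure_ball_lt_top.ne (by simp)
  -- a level `lam₀` making the Luxemburg condition hold for any function bounded by 1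
  obtain ⟨lam₀, hφlam, hlam₀1⟩ : ∃ lam₀ : ℝ, φ (1 / lam₀) ≤ 1 ∧ 1 ≤ lam₀ := by
    have h0 : Filter.Tendsto (fun lam : ℝ => 1 / lam) Filter.atTop (nhdsWithin 0 (Ici 0)) := by
      apply tendsto_nhdsWithin_of_tendsto_nhds_of_eventually_within
      · simpa [one_div] using tendsto_inv_atTop_zero
      · filter_upwards [Filter.eventually_ge_atTop (1:ℝ)] with lam hlam
        have hl : (0:ℝ) < lam := lt_of_lt_of_le one_pos hlam
        exact mem_Ici.2 (by positivity)
    have hc : Filter.Tendsto (fun lam : ℝ => φ (1 / lam)) Filter.atTop (nhds 0) := by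
      have h := ((hφ.continuous 0 self_mem_Ici).tendsto).comp h0
      rwa [hφ.zero] at h
    obtain ⟨lam₀, h1, h2⟩ :=
      ((hc.eventually_lt_const one_pos).and (Filter.eventually_ge_atTop (1:ℝ))).exists
    exact ⟨lam₀, h1.le, h2⟩
  have hlam₀0 : (0:ℝ) < lam₀ := lt_of_lt_of_le one_pos hlam₀1
  -- the Luxemburg averages of `w` are bounded by `lam₀`
  have hlux_le : ∀ (c : Euc d) (r₁ : ℝ), luxAvg φ w c r₁ ≤ lam₀ := by
    intro c r₁
    apply csInf_le ⟨0, fun y hy => hy.1.le⟩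
    refine ⟨hlam₀0, ?_⟩
    have hb : ∀ t ∈ ball c r₁, ‖φ (|w t| / lam₀)‖ ≤ 1 := by
      intro t _
      have h1 : (0:ℝ) ≤ |w t| / lam₀ := by positivity
      have habs : |w t| ≤ 1 := by
        rw [abs_of_nonneg (hw01 t).1]; exact (hw01 t).2
      have h2 : |w t| / lam₀ ≤ 1 / lam₀ := by gcongr
      have h3 : φ (|w t| / lam₀) ≤ 1 :=
        le_trans (hφ.mono (mem_Ici.2 h1) (mem_Ici.2 (by positivity)) h2) hφlam
      rw [Real.norm_eq_abs, abs_of_nonneg (hφ.nonneg _ h1)]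
      exact h3
    calc ∫ t in ball c r₁, φ (|w t| / lam₀)
        ≤ ‖∫ t in ball c r₁, φ (|w t| / lam₀)‖ := le_abs_self _
      _ ≤ 1 * (volume (ball c r₁)).toReal :=
          norm_setIntegral_le_of_norm_le_const measure_ball_lt_top hb
      _ = (volume (ball c r₁)).toReal := one_mul _
  -- the Luxemburg average vanishes for balls disjoint from `ball x₀ R`
  have hlux_zero : ∀ (c : Euc d) (r₁ : ℝ), ball c r₁ ∩ ball x₀ R = ∅ →
      luxAvg φ w c r₁ = 0 := by
    intro c r₁ hdisj
    have hint : ∀ lam : ℝ, (∫ t in ball c r₁, φ (|w t| / lam)) = 0 := by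
      intro lam
      rw [setIntegral_congr_fun (g := fun _ => (0:ℝ)) measurableSet_ball ?_, integral_zero]
      intro t ht
      have htw : w t = 0 := by
        have hnt : t ∉ ball x₀ R := fun h =>
          (Set.eq_empty_iff_forall_notMem.1 hdisj t) ⟨ht, h⟩
        simp [hwdef, Set.indicator_of_notMem hnt]
      simp [htw, hφ.zero]
    have hset : {lam : ℝ | 0 < lam ∧
        (∫ t in ball c r₁, φ (|w t| / lam)) ≤ (volume (ball c r₁)).toReal} = Ioi 0 := by
      ext lam
      simp only [mem_setOf_eq, mem_Ioi, hint]
      exact and_iff_left ENNReal.toReal_nonneg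
    rw [luxAvg, hset, csInf_Ioi]
  -- constants
  have hN₀1 : (0:ℝ) < N₀ + 1 := by linarith
  set β : ℝ := N₀ / (N₀ + 1) with hβdef
  have hβ0 : (0:ℝ) ≤ β := div_nonneg (by linarith) hN₀1.le
  have hβ1 : β ≤ 1 := by rw [hβdef, div_le_one hN₀1]; linarith
  set θ : ℝ := σ * (N₀ + 1) with hθdef
  have hθ0 : (0:ℝ) < θ := mul_pos hσ hN₀1
  have hβθ : (1 - β) * θ = σ := by
    rw [hβdef, hθdef]; field_simp; ring
  set Ac : ℝ := 1 + ‖x₀‖ + R + 2 with hAdef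
  have hA1 : (1:ℝ) ≤ Ac := by have := norm_nonneg x₀; rw [hAdef]; linarith
  have hρx₀ : (0:ℝ) < ρ x₀ := hρpos x₀
  set E : ℝ := max (C₀ * ρ x₀ * (1 + (R + 1) / ρ x₀)) 1 with hEdef
  have hE1 : (1:ℝ) ≤ E := le_max_right _ _
  have hE0 : (0:ℝ) < E := lt_of_lt_of_le one_pos hE1
  set Cs : ℝ := (2 * E) ^ θ * Ac ^ σ * lam₀ with hCsdef
  have hCs0 : (0:ℝ) ≤ Cs := by
    rw [hCsdef]; positivity
  -- pointwise bound for the maximal function of `w`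
  have hM : ∀ x : Euc d, orliczMaxTheta ρ θ φ w x ≤
      ENNReal.ofReal (Cs * (1 + ‖x‖) ^ (-σ)) := by
    intro x
    rw [orliczMaxTheta]
    refine iSup_le fun c => iSup_le fun r₁ => iSup_le fun hx => ?_
    rcases Set.eq_empty_or_nonempty (ball c r₁ ∩ ball x₀ R) with hdisj | ⟨z, hz1, hz2⟩
    · rw [hlux_zero c r₁ hdisj, mul_zero, ENNReal.ofReal_zero]
      exact zero_le
    · have hr₁ : 0 < r₁ := pos_of_mem_ball hx
      have hxc : dist x c < r₁ := mem_ball.1 hx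
      have hzc : dist z c < r₁ := mem_ball.1 hz1
      have hzx₀ : dist z x₀ < R := mem_ball.1 hz2
      have hρc : 0 < ρ c := hρpos c
      have h1r : (0:ℝ) < 1 + r₁ := by linarith
      have hdxc : dist x₀ c ≤ R + r₁ := by
        have h := dist_triangle x₀ z c
        rw [dist_comm x₀ z] at h
        linarith
      have hxA : 1 + ‖x‖ ≤ Ac * (1 + r₁) := by
        have h1 : dist x x₀ ≤ dist x c + dist c x₀ := dist_triangle _ _ _
        rw [dist_comm c x₀] at h1
        have h2 : ‖x‖ - ‖x₀‖ ≤ dist x x₀ := by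
          rw [dist_eq_norm]; exact norm_sub_norm_le x x₀
        rw [hAdef]
        nlinarith [norm_nonneg x₀, hr₁, hR0]
      -- sub-linear growth of `ρ c`
      have hρcb : ρ c ≤ E * (1 + r₁) ^ β := by
        have h2 := (hρineq x₀ c).2
        set D : ℝ := 1 + (R + 1) / ρ x₀ with hDdef
        have hD1 : (1:ℝ) ≤ D := by
          have : (0:ℝ) ≤ (R + 1) / ρ x₀ := by positivity
          rw [hDdef]; linarith
        have hD0 : (0:ℝ) < D := lt_of_lt_of_le one_pos hD1
        have h3 : 1 + dist x₀ c / ρ x₀ ≤ D * (1 + r₁) := by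
          have hdd : dist x₀ c / ρ x₀ ≤ (R + r₁) / ρ x₀ := by gcongr
          have hsplit : (R + r₁) / ρ x₀ = R / ρ x₀ + r₁ / ρ x₀ := add_div _ _ _
          have hra : R / ρ x₀ ≤ (R + 1) / ρ x₀ := by gcongr; linarith
          have hrb : r₁ / ρ x₀ ≤ ((R + 1) / ρ x₀) * r₁ := by
            rw [div_mul_eq_mul_div]
            gcongr
            nlinarith
          have hDexp : D * (1 + r₁) = 1 + r₁ + (R + 1) / ρ x₀ + ((R + 1) / ρ x₀) * r₁ := by
            rw [hDdef]; ring
          linarith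
        have h4 : (1 + dist x₀ c / ρ x₀) ^ β ≤ (D * (1 + r₁)) ^ β :=
          Real.rpow_le_rpow (by positivity) h3 hβ0
        have h5 : (D * (1 + r₁)) ^ β = D ^ β * (1 + r₁) ^ β :=
          Real.mul_rpow hD0.le h1r.le
        have h6 : D ^ β ≤ D := by
          calc D ^ β ≤ D ^ (1:ℝ) := Real.rpow_le_rpow_of_exponent_le hD1 hβ1
            _ = D := Real.rpow_one D
        have h7 : C₀ * ρ x₀ * D ≤ E := le_max_left _ _
        have hX0 : (0:ℝ) ≤ (1 + r₁) ^ β := Real.rpow_nonneg h1r.le β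
        calc ρ c ≤ C₀ * ρ x₀ * (1 + dist x₀ c / ρ x₀) ^ β := h2
          _ ≤ C₀ * ρ x₀ * (D ^ β * (1 + r₁) ^ β) := by
              rw [← h5]
              exact mul_le_mul_of_nonneg_left h4 (by positivity)
          _ = (C₀ * ρ x₀ * D ^ β) * (1 + r₁) ^ β := by ring
          _ ≤ (C₀ * ρ x₀ * D) * (1 + r₁) ^ β := by
              apply mul_le_mul_of_nonneg_right _ hX0
              exact mul_le_mul_of_nonneg_left h6 (by positivity)
          _ ≤ E * (1 + r₁) ^ β := mul_le_mul_of_nonneg_right h7 hX0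
      -- lower bound for `1 + r₁ / ρ c`
      have hlow : (1 + r₁) ^ (1 - β) / (2 * E) ≤ 1 + r₁ / ρ c := by
        have hrc0 : (0:ℝ) ≤ r₁ / ρ c := by positivity
        rcases le_or_gt r₁ 1 with hc1 | hc1
        · have h1 : (1 + r₁) ^ (1 - β) ≤ (1 + r₁) ^ (1:ℝ) :=
            Real.rpow_le_rpow_of_exponent_le (by linarith) (by linarith)
          rw [Real.rpow_one] at h1
          have h2 : (1 + r₁) ^ (1 - β) / (2 * E) ≤ 2 / (2 * E) := by gcongr; linarith
          have h3 : 2 / (2 * E) ≤ 1 := by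
            rw [div_le_one (by positivity)]; linarith
          linarith
        · have hEr : (0:ℝ) < E * (1 + r₁) ^ β := by positivity
          have h1 : r₁ / (E * (1 + r₁) ^ β) ≤ r₁ / ρ c := by gcongr
          have h2 : (1 + r₁) ^ (1 - β) / (2 * E) ≤ r₁ / (E * (1 + r₁) ^ β) := by
            rw [div_le_div_iff₀ (by positivity) hEr]
            have heq : (1 + r₁) ^ (1 - β) * (E * (1 + r₁) ^ β) = E * (1 + r₁) := by
              rw [show (1 + r₁) ^ (1 - β) * (E * (1 + r₁) ^ β)
                  = E * ((1 + r₁) ^ (1 - β) * (1 + r₁) ^ β) from by ring,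
                ← Real.rpow_add h1r]
              norm_num
            rw [heq]
            nlinarith
          linarith
      have key : (1 + r₁ / ρ c) ^ (-θ) ≤ (2 * E) ^ θ * (Ac ^ σ * (1 + ‖x‖) ^ (-σ)) := by
        have hx0 : (0:ℝ) < 1 + ‖x‖ := by have := norm_nonneg x; linarith
        have h7 : ((1 + r₁) ^ (1 - β) / (2 * E)) ^ (-θ)
            = (2 * E) ^ θ * (1 + r₁) ^ (-σ) := by
          rw [Real.div_rpow (Real.rpow_nonneg h1r.le _) (by positivity),
            ← Real.rpow_mul h1r.le,
            show (1 - β) * (-θ) = -σ from by rw [← hβθ]; ring,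
            Real.rpow_neg (by positivity : (0:ℝ) ≤ 2 * E), div_inv_eq_mul]
          ring
        have h8 : (1 + r₁) ^ (-σ) ≤ Ac ^ σ * (1 + ‖x‖) ^ (-σ) := by
          have hA : (1 + ‖x‖) ^ σ ≤ Ac ^ σ * (1 + r₁) ^ σ := by
            rw [← Real.mul_rpow (by positivity) h1r.le]
            exact Real.rpow_le_rpow hx0.le hxA hσ.le
          have hp1 : (0:ℝ) < (1 + r₁) ^ σ := Real.rpow_pos_of_pos h1r σ
          have hp2 : (0:ℝ) < (1 + ‖x‖) ^ σ := Real.rpow_pos_of_pos hx0 σ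
          rw [Real.rpow_neg h1r.le, Real.rpow_neg hx0.le, inv_eq_one_div,
            ← div_eq_mul_inv, div_le_div_iff₀ hp1 hp2, one_mul]
          exact hA
        calc (1 + r₁ / ρ c) ^ (-θ) ≤ ((1 + r₁) ^ (1 - β) / (2 * E)) ^ (-θ) :=
            Real.rpow_le_rpow_of_nonpos (by positivity) hlow (by linarith)
          _ = (2 * E) ^ θ * (1 + r₁) ^ (-σ) := h7
          _ ≤ (2 * E) ^ θ * (Ac ^ σ * (1 + ‖x‖) ^ (-σ)) :=
            mul_le_mul_of_nonneg_left h8 (Real.rpow_nonneg (by positivity) θ)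
      apply ENNReal.ofReal_le_ofReal
      calc (1 + r₁ / ρ c) ^ (-θ) * luxAvg φ w c r₁
          ≤ ((2 * E) ^ θ * (Ac ^ σ * (1 + ‖x‖) ^ (-σ))) * lam₀ :=
            mul_le_mul key (hlux_le c r₁) (stmt18_luxAvg_nonneg φ w c r₁) (by positivity)
        _ = Cs * (1 + ‖x‖) ^ (-σ) := by rw [hCsdef]; ring
  -- put everything together
  obtain ⟨C, hCpos, hTbd⟩ := hT θ hθ0.le
  have step2 : (∫⁻ x in ball x₀ R, ENNReal.ofReal (|T f x| ^ p)) =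
      ∫⁻ x, ENNReal.ofReal (|T f x| ^ p * w x) := by
    rw [← lintegral_indicator measurableSet_ball]
    apply lintegral_congr
    intro x
    by_cases hx : x ∈ ball x₀ R
    · simp [hwdef, Set.indicator_of_mem hx]
    · simp [hwdef, Set.indicator_of_notMem hx]
  have step4 : (∫⁻ x, ENNReal.ofReal (|f x| ^ p) * orliczMaxTheta ρ θ φ w x) ≤
      ENNReal.ofReal Cs * ∫⁻ x, ENNReal.ofReal (|f x| ^ p * (1 + ‖x‖) ^ (-σ)) := by
    calc (∫⁻ x, ENNReal.ofReal (|f x| ^ p) * orliczMaxTheta ρ θ φ w x)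
        ≤ ∫⁻ x, ENNReal.ofReal (|f x| ^ p) * ENNReal.ofReal (Cs * (1 + ‖x‖) ^ (-σ)) :=
          lintegral_mono fun x => mul_le_mul_right (hM x) _
      _ = ∫⁻ x, ENNReal.ofReal Cs * ENNReal.ofReal (|f x| ^ p * (1 + ‖x‖) ^ (-σ)) := by
          apply lintegral_congr
          intro x
          rw [← ENNReal.ofReal_mul (by positivity : (0:ℝ) ≤ |f x| ^ p),
            ← ENNReal.ofReal_mul hCs0]
          congr 1; ring
      _ = ENNReal.ofReal Cs * ∫⁻ x, ENNReal.ofReal (|f x| ^ p * (1 + ‖x‖) ^ (-σ)) :=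
          lintegral_const_mul' _ _ ENNReal.ofReal_ne_top
  calc (∫⁻ x in ball x₀ r, ENNReal.ofReal (|T f x| ^ p))
      ≤ ∫⁻ x in ball x₀ R, ENNReal.ofReal (|T f x| ^ p) :=
        lintegral_mono_set (ball_subset_ball (le_max_left r 1))
    _ = ∫⁻ x, ENNReal.ofReal (|T f x| ^ p * w x) := step2
    _ ≤ ENNReal.ofReal C * ∫⁻ x, ENNReal.ofReal (|f x| ^ p) * orliczMaxTheta ρ θ φ w x :=
        hTbd w hw f hfS
    _ ≤ ENNReal.ofReal C *
        (ENNReal.ofReal Cs * ∫⁻ x, ENNReal.ofReal (|f x| ^ p * (1 + ‖x‖) ^ (-σ))) :=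
        mul_le_mul_right step4 _
    _ < ⊤ := ENNReal.mul_lt_top ENNReal.ofReal_lt_top
        (ENNReal.mul_lt_top ENNReal.ofReal_lt_top hfin)
end
end

section
/- Let ρ be a critical radius function on ℝ^d, let φ be a Young function, and let T be a map from a set S of measurable functions on ℝ^d to measurable functions on ℝ^d such that: for every θ ≥ 0 there exists a constant C with w({x : |Tf(x)| > λ}) ≤ (C/λ) ∫ |f| M_φ^θ w for every weight w, every f ∈ S, and every λ > 0. Then for every f ∈ S satisfying ∫_{ℝ^d} |f(x)| (1+|x|)^{−σ} dx < ∞ for some σ > 0, Tf belongs to L^{1,∞}_{loc}(ℝ^d), i.e. for every ball B one has sup_{λ>0} λ·|{x ∈ B : |Tf(x)| > λ}| < ∞; in particular Tf is finite almost everywhere. -/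
open MeasureTheory Metric Set
open scoped ENNReal NNReal

noncomputable section

set_option maxHeartbeats 1000000 in
/-- Theorem 5.4: if `T` satisfies, for every `θ ≥ 0`,
`w({|Tf| > λ}) ≤ (C/λ) ∫ |f| M_φ^θ w` for all weights `w`, all `f ∈ S` and all `λ > 0`, then
for every `f ∈ S` with `∫ |f| (1+|x|)^{-σ} < ∞` for some `σ > 0`, `Tf ∈ L^{1,∞}_loc`, i.e. on
every ball `B`, `sup_{λ>0} λ |{x ∈ B : |Tf(x)| > λ}| < ∞`. -/
theorem stmt19 {d : ℕ} (hd : 1 ≤ d) (ρ : Euc d → ℝ) (C₀ N₀ : ℝ)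
    (hρ : IsCriticalRadius ρ C₀ N₀)
    (φ : ℝ → ℝ) (hφ : IsYoung φ)
    (S : Set (Euc d → ℝ)) (T : (Euc d → ℝ) → Euc d → ℝ)
    (hT : ∀ θ : ℝ, 0 ≤ θ → ∃ C > (0:ℝ), ∀ w : Euc d → ℝ, IsWeight w → ∀ f ∈ S,
      ∀ lam > (0:ℝ),
      ∫⁻ x in {y : Euc d | lam < |T f y|}, ENNReal.ofReal (w x) ≤
        ENNReal.ofReal (C / lam) *
          ∫⁻ x, ENNReal.ofReal (|f x|) * orliczMaxTheta ρ θ φ w x) :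
    ∀ f ∈ S,
      (∃ σ > (0:ℝ),
        (∫⁻ x : Euc d, ENNReal.ofReal (|f x| * (1 + ‖x‖) ^ (-σ))) < ⊤) →
      ∀ (x₀ : Euc d) (r : ℝ),
        (⨆ lam ∈ Ioi (0:ℝ), ENNReal.ofReal lam *
          volume {x ∈ ball x₀ r | lam < |T f x|}) < ⊤ := by
  obtain ⟨hC₀, hN₀, hρpos, hρbd⟩ := hρ
  rintro f hfS ⟨σ, hσ, hI⟩ x₀ r₀
  -- pick t₀ > 0 with φ t₀ < 1
  obtain ⟨t₀, ht₀lt, ht₀pos⟩ : ∃ t : ℝ, φ t < 1 ∧ 0 < t := by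
    have hcw : ContinuousWithinAt φ (Ici 0) 0 := hφ.continuous 0 Set.self_mem_Ici
    have h1 : ∀ᶠ t in nhdsWithin 0 (Ici (0:ℝ)), φ t < 1 := by
      have : Iio (1:ℝ) ∈ nhds (φ 0) := Iio_mem_nhds (by rw [hφ.zero]; norm_num)
      exact hcw this
    have h2 : ∀ᶠ t in nhdsWithin 0 (Ioi (0:ℝ)), φ t < 1 :=
      h1.filter_mono (nhdsWithin_mono _ Ioi_subset_Ici_self)
    exact (h2.and (eventually_mem_nhdsWithin)).exists
  set w : Euc d → ℝ := (ball x₀ r₀).indicator fun _ => (1:ℝ) with hwdef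
  have hw_isw : IsWeight w := by
    constructor
    · exact fun x => Set.indicator_nonneg (fun _ _ => zero_le_one) x
    · refine Integrable.locallyIntegrable ?_
      rw [hwdef, integrable_indicator_iff measurableSet_ball]
      exact integrableOn_const measure_ball_lt_top.ne
  have hlux_nonneg : ∀ (c : Euc d) (r : ℝ), 0 ≤ luxAvg φ w c r :=
    fun c r => Real.sInf_nonneg (fun lam hl => hl.1.le)
  have hlux_le : ∀ (c : Euc d) (r : ℝ), luxAvg φ w c r ≤ 1 / t₀ := by
    intro c r
    apply csInf_le ⟨0, fun lam hl => hl.1.le⟩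
    refine ⟨by positivity, ?_⟩
    have hpt : ∀ t : Euc d, φ (|w t| / (1 / t₀)) =
        (ball x₀ r₀).indicator (fun _ => φ t₀) t := by
      intro t
      by_cases ht : t ∈ ball x₀ r₀
      · simp [hwdef, Set.indicator_of_mem ht, one_div_one_div]
      · simp [hwdef, Set.indicator_of_notMem ht, hφ.zero]
    calc (∫ t in ball c r, φ (|w t| / (1 / t₀)))
        = ∫ t in ball c r, (ball x₀ r₀).indicator (fun _ => φ t₀) t := by simp_rw [hpt]
      _ = ∫ _ in ball c r ∩ ball x₀ r₀, φ t₀ := setIntegral_indicator measurableSet_ball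
      _ = (volume (ball c r ∩ ball x₀ r₀)).toReal * φ t₀ := by
          rw [setIntegral_const, smul_eq_mul]; rfl
      _ ≤ (volume (ball c r)).toReal * 1 :=
          mul_le_mul (ENNReal.toReal_mono measure_ball_lt_top.ne
            (measure_mono inter_subset_left)) ht₀lt.le (hφ.nonneg t₀ ht₀pos.le)
            ENNReal.toReal_nonneg
      _ = (volume (ball c r)).toReal := mul_one _
  have hlux0 : ∀ (c : Euc d) (r : ℝ), ball c r ∩ ball x₀ r₀ = ∅ →
      luxAvg φ w c r = 0 := by
    intro c r hdisj
    have hset : {lam : ℝ | 0 < lam ∧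
        (∫ t in ball c r, φ (|w t| / lam)) ≤ (volume (ball c r)).toReal} = Ioi 0 := by
      ext lam
      simp only [mem_setOf_eq, mem_Ioi, and_iff_left_iff_imp]
      intro hlam
      have heq : EqOn (fun t => φ (|w t| / lam)) (fun _ => (0:ℝ)) (ball c r) := by
        intro t ht
        have htB : t ∉ ball x₀ r₀ := by
          intro h
          have : t ∈ ball c r ∩ ball x₀ r₀ := ⟨ht, h⟩
          rw [hdisj] at this
          exact this
        simp [hwdef, Set.indicator_of_notMem htB, hφ.zero]
      rw [setIntegral_congr_fun measurableSet_ball heq, integral_zero]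
      exact ENNReal.toReal_nonneg
    unfold luxAvg
    rw [hset]
    exact csInf_Ioi
  -- constants
  set θ := σ * (N₀ + 1) with hθdef
  have hN₀1 : (0:ℝ) < N₀ + 1 := by linarith
  have hθ : 0 ≤ θ := by positivity
  obtain ⟨C, hC, hTC⟩ := hT θ hθ
  set β := N₀ / (N₀ + 1) with hβdef
  have hβ0 : 0 ≤ β := by positivity
  have hβ1 : β ≤ 1 := by rw [hβdef, div_le_one hN₀1]; linarith
  set ρ0 := ρ x₀ with hρ0def
  have hρ0 : 0 < ρ0 := hρpos x₀
  set m := 1 + |r₀| / ρ0 + 1 / ρ0 with hmdef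
  have hm1 : 1 ≤ m := by
    have h1 : 0 ≤ |r₀| / ρ0 := by positivity
    have h2 : 0 ≤ 1 / ρ0 := by positivity
    rw [hmdef]; linarith
  set A := C₀ * ρ0 * m with hAdef
  have hA : 0 < A := mul_pos (mul_pos hC₀ hρ0) (lt_of_lt_of_le one_pos hm1)
  set ε := min (1 / (2 * A)) (1 / 2 : ℝ) with hεdef
  have hε : 0 < ε := lt_min (by positivity) (by norm_num)
  set K₂ := 3 + ‖x₀‖ + |r₀| with hK₂def
  have hK₂2 : 2 ≤ K₂ := by
    have := norm_nonneg x₀; have := abs_nonneg r₀; rw [hK₂def]; linarith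
  have hK₂ : 0 < K₂ := by linarith
  set Cp := (1 / t₀) * (ε ^ (-θ) * K₂ ^ σ) with hCpdef
  have hCp0 : 0 ≤ Cp := by positivity
  -- pointwise bound on the maximal function of w
  have hM : ∀ x : Euc d, orliczMaxTheta ρ θ φ w x ≤
      ENNReal.ofReal (Cp * (1 + ‖x‖) ^ (-σ)) := by
    intro x
    refine iSup_le fun c => iSup_le fun r => iSup_le fun hx => ?_
    by_cases hne : (ball c r ∩ ball x₀ r₀).Nonempty
    · obtain ⟨z, hz1, hz2⟩ := hne
      have hxc : dist x c < r := mem_ball.1 hx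
      have hr : 0 < r := lt_of_le_of_lt dist_nonneg hxc
      have hρc : 0 < ρ c := hρpos c
      have h1r0 : (0:ℝ) < 1 + r := by linarith
      have hdxc : dist x₀ c < |r₀| + r := by
        have ht := dist_triangle x₀ z c
        have h2 : dist x₀ z < r₀ := by rw [dist_comm]; exact mem_ball.1 hz2
        have h3 : dist z c < r := mem_ball.1 hz1
        have h4 := le_abs_self r₀
        linarith
      have hbase : 1 + dist x₀ c / ρ0 ≤ m * (1 + r) := by
        have h0 : dist x₀ c / ρ0 ≤ (|r₀| + r) / ρ0 := by gcongr
        have h1 : (|r₀| + r) / ρ0 = |r₀| / ρ0 + r * (1 / ρ0) := by ring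
        have h5 : 0 ≤ |r₀| / ρ0 := by positivity
        have h6 : 1 / ρ0 ≤ m := by rw [hmdef]; linarith
        have h2 : r * (1 / ρ0) ≤ r * m := mul_le_mul_of_nonneg_left h6 hr.le
        have h5b : (0:ℝ) ≤ 1 / ρ0 := by positivity
        have h7 : 1 + |r₀| / ρ0 ≤ m := by rw [hmdef]; linarith
        calc 1 + dist x₀ c / ρ0 ≤ 1 + (|r₀| / ρ0 + r * (1 / ρ0)) := by
              rw [← h1]; linarith
          _ ≤ m + r * m := by linarith
          _ = m * (1 + r) := by ring
      have hρcb : ρ c ≤ A * (1 + r) ^ β := by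
        have hCρ : 0 < C₀ * ρ0 := mul_pos hC₀ hρ0
        have h1rβ : 0 ≤ (1 + r) ^ β := Real.rpow_nonneg h1r0.le β
        calc ρ c ≤ C₀ * ρ0 * (1 + dist x₀ c / ρ0) ^ β := (hρbd x₀ c).2
          _ ≤ C₀ * ρ0 * (m * (1 + r)) ^ β :=
              mul_le_mul_of_nonneg_left
                (Real.rpow_le_rpow (by positivity) hbase hβ0) hCρ.le
          _ = C₀ * ρ0 * (m ^ β * (1 + r) ^ β) := by
              rw [Real.mul_rpow (by linarith) h1r0.le]
          _ ≤ C₀ * ρ0 * (m * (1 + r) ^ β) := by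
              have hm2 : m ^ β ≤ m := by
                calc m ^ β ≤ m ^ (1:ℝ) := Real.rpow_le_rpow_of_exponent_le hm1 hβ1
                  _ = m := Real.rpow_one m
              exact mul_le_mul_of_nonneg_left
                (mul_le_mul_of_nonneg_right hm2 h1rβ) hCρ.le
          _ = A * (1 + r) ^ β := by rw [hAdef]; ring
      have hrpow0 : (0:ℝ) < (1 + r) ^ β := Real.rpow_pos_of_pos h1r0 β
      have hkey : ε * (1 + r) ^ (1 - β) ≤ 1 + r / ρ c := by
        rcases le_or_gt 1 r with h1r | h1r
        · have hsub : (1 + r) ^ (1 - β) = (1 + r) / (1 + r) ^ β := by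
            rw [Real.rpow_sub h1r0, Real.rpow_one]
          have hstep : ε * (1 + r) ^ (1 - β) ≤ r / ρ c := by
            calc ε * (1 + r) ^ (1 - β) ≤ (1 / (2 * A)) * ((1 + r) / (1 + r) ^ β) := by
                  rw [hsub]
                  exact mul_le_mul_of_nonneg_right (min_le_left _ _)
                    (by positivity)
              _ ≤ (1 / (2 * A)) * ((2 * r) / (1 + r) ^ β) := by gcongr; linarith
              _ = r / (A * (1 + r) ^ β) := by field_simp
              _ ≤ r / ρ c := by gcongr
          linarith [div_nonneg hr.le hρc.le]
        · have h2 : (1 + r) ^ (1 - β) ≤ 2 := by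
            calc (1 + r) ^ (1 - β) ≤ (2:ℝ) ^ (1 - β) :=
                  Real.rpow_le_rpow h1r0.le (by linarith) (by linarith)
              _ ≤ (2:ℝ) ^ (1:ℝ) :=
                  Real.rpow_le_rpow_of_exponent_le one_le_two (by linarith)
              _ = 2 := Real.rpow_one 2
          have h3 : ε * (1 + r) ^ (1 - β) ≤ (1 / 2) * 2 :=
            mul_le_mul (min_le_right _ _) h2 (Real.rpow_nonneg h1r0.le _) (by norm_num)
          have h4 : 0 ≤ r / ρ c := by positivity
          linarith
      have hεpow : (0:ℝ) < ε * (1 + r) ^ (1 - β) :=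
        mul_pos hε (Real.rpow_pos_of_pos h1r0 _)
      have hd1 : (1 + r / ρ c) ^ (-θ) ≤ (ε * (1 + r) ^ (1 - β)) ^ (-θ) :=
        Real.rpow_le_rpow_of_nonpos hεpow hkey (neg_nonpos.2 hθ)
      have hd2 : (ε * (1 + r) ^ (1 - β)) ^ (-θ) = ε ^ (-θ) * (1 + r) ^ (-σ) := by
        have hne : N₀ + 1 ≠ 0 := hN₀1.ne'
        have hexp : (1 - β) * (-θ) = -σ := by
          rw [hβdef, hθdef]; field_simp; ring
        rw [Real.mul_rpow hε.le (Real.rpow_nonneg h1r0.le _),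
          ← Real.rpow_mul h1r0.le, hexp]
      have hxnorm : 1 + ‖x‖ ≤ K₂ * (1 + r) := by
        have h5 : ‖x‖ - ‖x₀‖ ≤ dist x x₀ := by
          rw [dist_eq_norm]; exact norm_sub_norm_le x x₀
        have h6 : dist x x₀ ≤ dist x c + dist c x₀ := dist_triangle x c x₀
        have h7 : dist c x₀ = dist x₀ c := dist_comm c x₀
        have h10 : 2 * r ≤ K₂ * r := mul_le_mul_of_nonneg_right hK₂2 hr.le
        calc 1 + ‖x‖ ≤ K₂ + 2 * r := by rw [hK₂def]; linarith
          _ ≤ K₂ + K₂ * r := by linarith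
          _ = K₂ * (1 + r) := by ring
      have hd3 : (1 + r) ^ (-σ) ≤ K₂ ^ σ * (1 + ‖x‖) ^ (-σ) := by
        have hx0 : (0:ℝ) < 1 + ‖x‖ := by positivity
        have h7 : (K₂ * (1 + r)) ^ (-σ) ≤ (1 + ‖x‖) ^ (-σ) :=
          Real.rpow_le_rpow_of_nonpos hx0 hxnorm (neg_nonpos.2 hσ.le)
        have h8 : (K₂ * (1 + r)) ^ (-σ) = K₂ ^ (-σ) * (1 + r) ^ (-σ) :=
          Real.mul_rpow hK₂.le h1r0.le
        have h9 : K₂ ^ σ * K₂ ^ (-σ) = 1 := by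
          rw [← Real.rpow_add hK₂]; simp
        calc (1 + r) ^ (-σ) = K₂ ^ σ * (K₂ ^ (-σ) * (1 + r) ^ (-σ)) := by
              rw [← mul_assoc, h9, one_mul]
          _ = K₂ ^ σ * (K₂ * (1 + r)) ^ (-σ) := by rw [h8]
          _ ≤ K₂ ^ σ * (1 + ‖x‖) ^ (-σ) := by
              exact mul_le_mul_of_nonneg_left h7 (Real.rpow_nonneg hK₂.le σ)
      apply ENNReal.ofReal_le_ofReal
      calc (1 + r / ρ c) ^ (-θ) * luxAvg φ w c r
          ≤ (ε ^ (-θ) * (K₂ ^ σ * (1 + ‖x‖) ^ (-σ))) * (1 / t₀) := by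
            apply mul_le_mul ?_ (hlux_le c r) (hlux_nonneg c r) (by positivity)
            calc (1 + r / ρ c) ^ (-θ) ≤ (ε * (1 + r) ^ (1 - β)) ^ (-θ) := hd1
              _ = ε ^ (-θ) * (1 + r) ^ (-σ) := hd2
              _ ≤ ε ^ (-θ) * (K₂ ^ σ * (1 + ‖x‖) ^ (-σ)) :=
                  mul_le_mul_of_nonneg_left hd3 (Real.rpow_nonneg hε.le _)
        _ = Cp * (1 + ‖x‖) ^ (-σ) := by rw [hCpdef]; ring
    · have h0 := hlux0 c r (not_nonempty_iff_eq_empty.1 hne)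
      simp [h0]
  -- the weighted integral is finite
  set Jb := ENNReal.ofReal Cp * ∫⁻ x : Euc d, ENNReal.ofReal (|f x| * (1 + ‖x‖) ^ (-σ))
    with hJbdef
  have hJ : (∫⁻ x, ENNReal.ofReal (|f x|) * orliczMaxTheta ρ θ φ w x) ≤ Jb := by
    rw [hJbdef, ← lintegral_const_mul' _ _ ENNReal.ofReal_ne_top]
    apply lintegral_mono
    intro x
    calc ENNReal.ofReal (|f x|) * orliczMaxTheta ρ θ φ w x
        ≤ ENNReal.ofReal (|f x|) * ENNReal.ofReal (Cp * (1 + ‖x‖) ^ (-σ)) :=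
          mul_le_mul_right (hM x) _
      _ = ENNReal.ofReal Cp * ENNReal.ofReal (|f x| * (1 + ‖x‖) ^ (-σ)) := by
          rw [← ENNReal.ofReal_mul (abs_nonneg _), ← ENNReal.ofReal_mul hCp0]
          congr 1
          ring
  have hJb_lt : Jb < ⊤ := ENNReal.mul_lt_top ENNReal.ofReal_lt_top hI
  have hfin : ENNReal.ofReal C * Jb < ⊤ := ENNReal.mul_lt_top ENNReal.ofReal_lt_top hJb_lt
  refine lt_of_le_of_lt (iSup_le fun lam => iSup_le fun hlam => ?_) hfin
  have hlam0 : (0:ℝ) < lam := hlam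
  have hbd := hTC w hw_isw f hfS lam hlam0
  have hvol : volume {x ∈ ball x₀ r₀ | lam < |T f x|} =
      ∫⁻ x in {y : Euc d | lam < |T f y|}, ENNReal.ofReal (w x) := by
    have hpt : ∀ x : Euc d, ENNReal.ofReal (w x) =
        (ball x₀ r₀).indicator (fun _ => (1:ℝ≥0∞)) x := by
      intro x
      by_cases hxx : x ∈ ball x₀ r₀ <;> simp [hwdef, hxx]
    simp_rw [hpt]
    rw [lintegral_indicator measurableSet_ball, setLIntegral_one,
      Measure.restrict_apply measurableSet_ball]
    rfl
  calc ENNReal.ofReal lam * volume {x ∈ ball x₀ r₀ | lam < |T f x|}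
      ≤ ENNReal.ofReal lam * (ENNReal.ofReal (C / lam) *
        ∫⁻ x, ENNReal.ofReal (|f x|) * orliczMaxTheta ρ θ φ w x) := by
        rw [hvol]; exact mul_le_mul_right hbd _
    _ ≤ ENNReal.ofReal lam * (ENNReal.ofReal (C / lam) * Jb) :=
        mul_le_mul_right (mul_le_mul_right hJ _) _
    _ = ENNReal.ofReal (lam * (C / lam)) * Jb := by
        rw [ENNReal.ofReal_mul hlam0.le, mul_assoc]
    _ = ENNReal.ofReal C * Jb := by
        congr 2
        field_simp
end
end
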